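/- arXiv:1312.4650 — 4 statements merged into one kernel-verified Lean document; each statement's English description precedes it below -/
import Mathlib

section
/- The group homomorphism from the free group on seven generators to GL(4,ℤ) sending the seven generators to the matrices S₁S₂, S₁S₃, S₁S₄, S₁S₅, S₁S₆, S₁S₇, S₁S₈ is injective; that is, the orientation-preserving Apollonian 3-group A = Ã ∩ SO_Q(ℤ) is a free group of rank 7 on these generators. -/
open Matrix

/-- The quadratic form `Q(x,y,z,w) = w² - 2w(x+y+z) + x² + y² + z²`. -/
def QF (v : Fin 4 → ℤ) : ℤ :=
  v 3 ^ 2 - 2 * v 3 * (v 0 + v 1 + v 2) + v 0 ^ 2 + v 1 ^ 2 + v 2 ^ 2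

/-- The eight reflection generators `S₁, …, S₈` of the Apollonian 3-group. -/
def S : Fin 8 → Matrix (Fin 4) (Fin 4) ℤ :=
  ![!![1,0,0,0; 0,1,0,0; 0,0,1,0; 2,2,2,-1],
    !![-3,4,4,4; 0,1,0,0; 0,0,1,0; -2,2,2,3],
    !![1,0,0,0; 4,-3,4,4; 0,0,1,0; 2,-2,2,3],
    !![1,0,0,0; 0,1,0,0; 4,4,-3,4; 2,2,-2,3],
    !![-3,-4,4,12; -4,-3,4,12; 0,0,1,0; -2,-2,2,7],
    !![-3,4,-4,12; 0,1,0,0; -4,4,-3,12; -2,2,-2,7],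
    !![1,0,0,0; 4,-3,-4,12; 4,-4,-3,12; 2,-2,-2,7],
    !![-3,-4,-4,20; -4,-3,-4,20; -4,-4,-3,20; -2,-2,-2,11]]

theorem S_invol : ∀ i : Fin 8, S i * S i = 1 := by decide

/-- The generators as elements of `GL(4, ℤ)`. -/
def SU (i : Fin 8) : GL (Fin 4) ℤ := ⟨S i, S i, S_invol i, S_invol i⟩

/-- The Apollonian 3-group `Ã = ⟨S₁,…,S₈⟩ ≤ GL(4, ℤ)`. -/
def apollonian3Group : Subgroup (GL (Fin 4) ℤ) := Subgroup.closure (Set.range SU)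

/-- The dual root quadruple `r' = (2w-κ₁, 2w-κ₂, 2w-κ₃, w)`. -/
def dualRoot (r : Fin 4 → ℤ) : Fin 4 → ℤ :=
  ![2 * r 3 - r 0, 2 * r 3 - r 1, 2 * r 3 - r 2, r 3]

/-- The set of curvatures of the Apollonian-3 packing with root quadruple `r`:
the first three entries of the quadruples in the orbits `Ã·r` and `Ã·r'`. -/
def curvatureSet (r : Fin 4 → ℤ) : Set ℤ :=
  {n | ∃ γ ∈ apollonian3Group, ∃ i : Fin 3,
      Matrix.mulVec (γ : Matrix (Fin 4) (Fin 4) ℤ) r i.castSucc = n} ∪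
  {n | ∃ γ ∈ apollonian3Group, ∃ i : Fin 3,
      Matrix.mulVec (γ : Matrix (Fin 4) (Fin 4) ℤ) (dualRoot r) i.castSucc = n}

/-- The packing is primitive: the gcd of the set of curvatures is 1. -/
def IsPrimitivePacking (r : Fin 4 → ℤ) : Prop :=
  ∀ d : ℤ, (∀ n ∈ curvatureSet r, d ∣ n) → IsUnit d



namespace Apollo3Free

open Matrix

/-- Covectors of the mirror hyperplanes of the reflections `S j`. -/
def mvec : Fin 8 → Fin 4 → ℤ :=
  ![![1,1,1,-1], ![-1,1,1,1], ![1,-1,1,1], ![1,1,-1,1],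
    ![-1,-1,1,3], ![-1,1,-1,3], ![1,-1,-1,3], ![-1,-1,-1,5]]

/-- The "Coxeter" coefficients: `mvec k * S j = mvec k - cc k j • mvec j`. -/
def cc : Fin 8 → Fin 8 → ℤ :=
  ![![2, -2, -2, -2, -6, -6, -6, -10],
    ![-2, 2, -6, -6, -2, -2, -10, -6],
    ![-2, -6, 2, -6, -2, -10, -2, -6],
    ![-2, -6, -6, 2, -10, -2, -2, -6],
    ![-6, -2, -2, -10, 2, -6, -6, -2],
    ![-6, -2, -10, -2, -6, 2, -6, -2],
    ![-6, -10, -2, -2, -6, -6, 2, -2],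
    ![-10, -6, -6, -6, -2, -2, -2, 2]]

/-- Base point for the ping-pong argument. -/
def v0 : Fin 4 → ℤ := ![-1, -1, -1, -2]

/-- The linear functionals used in the ping-pong argument. -/
def f (j : Fin 8) (v : Fin 4 → ℤ) : ℤ := mvec j ⬝ᵥ v

theorem key : ∀ k j : Fin 8, Matrix.vecMul (mvec k) (S j) = mvec k - cc k j • mvec j := by
  decide

theorem cc_diag : ∀ j : Fin 8, cc j j = 2 := by decide

theorem cc_off : ∀ k j : Fin 8, k ≠ j → cc k j ≤ -2 := by decide

theorem f_v0_neg : ∀ j : Fin 8, f j v0 < 0 := by decide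

theorem f_mulVec (k j : Fin 8) (v : Fin 4 → ℤ) :
    f k (S j *ᵥ v) = f k v - cc k j * f j v := by
  unfold f
  rw [Matrix.dotProduct_mulVec, key k j, sub_dotProduct, smul_dotProduct,
    smul_eq_mul]

/-- The ping-pong region attached to the reflection `S j`. -/
def P (j : Fin 8) (v : Fin 4 → ℤ) : Prop :=
  0 < f j v ∧ ∀ k : Fin 8, k ≠ j → f k v ≤ -f j v

theorem step (j : Fin 8) (v : Fin 4 → ℤ) (hneg : f j v < 0)
    (hle : ∀ k : Fin 8, k ≠ j → f k v ≤ -f j v) : P j (S j *ᵥ v) := by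
  constructor
  · rw [f_mulVec, cc_diag]; linarith
  · intro k hk
    rw [f_mulVec, f_mulVec, cc_diag]
    have h1 := cc_off k j hk
    have h2 := hle k hk
    have h3 : (0 : ℤ) ≤ (-2 - cc k j) * (-f j v) :=
      mul_nonneg (by linarith) (by linarith)
    nlinarith

theorem entry (j : Fin 8) (v : Fin 4 → ℤ)
    (h : (∀ k : Fin 8, f k v < 0) ∨ ∃ j' : Fin 8, j' ≠ j ∧ P j' v) :
    P j (S j *ᵥ v) := by
  rcases h with h | ⟨j', hne, hP⟩
  · exact step j v (h j) (fun k _ => by have := h k; have := h j; linarith)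
  · have hj : f j v ≤ -f j' v := hP.2 j hne.symm
    have hpos : 0 < f j' v := hP.1
    refine step j v (by linarith) (fun k hk => ?_)
    by_cases hkj : k = j'
    · subst hkj; linarith
    · have := hP.2 k hkj; linarith

/-- The letter-to-matrix map for the free group generators. -/
def M' (x : Fin 7 × Bool) : Matrix (Fin 4) (Fin 4) ℤ :=
  if x.2 then S 0 * S x.1.succ else S x.1.succ * S 0

/-- The product of matrices corresponding to a word. -/
def prodS (L : List (Fin 7 × Bool)) : Matrix (Fin 4) (Fin 4) ℤ := (L.map M').prod

/-- "No adjacent inverse letters" relation. -/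
def R (a b : Fin 7 × Bool) : Prop := ¬(a.1 = b.1 ∧ b.2 = !a.2)

/-- The invariant maintained along the word. -/
def Hw : List (Fin 7 × Bool) → (Fin 4 → ℤ) → Prop
  | [], v => v = v0
  | (i, true) :: _, v => P i.succ (S 0 *ᵥ v)
  | (i, false) :: _, v => P i.succ v

theorem S0_S0 (v : Fin 4 → ℤ) : S 0 *ᵥ (S 0 *ᵥ v) = v := by
  rw [Matrix.mulVec_mulVec, S_invol, Matrix.one_mulVec]

theorem mainAux : ∀ L : List (Fin 7 × Bool), List.Chain' R L → Hw L (prodS L *ᵥ v0)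
  | [], _ => by simp [prodS, Hw, Matrix.one_mulVec]
  | (i, b) :: L', hch => by
    have hch' : List.Chain' R L' := hch.tail
    have IH := mainAux L' hch'
    set v' : Fin 4 → ℤ := prodS L' *ᵥ v0 with hv'
    have hpr : prodS ((i, b) :: L') *ᵥ v0 = M' (i, b) *ᵥ v' := by
      rw [hv', prodS, List.map_cons, List.prod_cons, ← Matrix.mulVec_mulVec]; rfl
    have hdisj : ∀ jj : Fin 8,
        ((∀ k : Fin 8, f k v' < 0) ∨ ∃ j' : Fin 8, j' ≠ jj ∧ P j' v') ∨
        True := fun _ => Or.inr trivial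
    cases b
    · -- b = false : goal `P i.succ (prodS ((i,false)::L') *ᵥ v0)`
      show P i.succ (prodS ((i, false) :: L') *ᵥ v0)
      rw [hpr]
      have hM : M' (i, false) = S i.succ * S 0 := rfl
      rw [hM, ← Matrix.mulVec_mulVec]
      refine entry i.succ (S 0 *ᵥ v') (Or.inr ?_)
      match L', IH with
      | [], IH =>
        refine ⟨0, (Fin.succ_ne_zero i).symm, ?_⟩
        rw [show v' = v0 from IH]
        exact entry 0 v0 (Or.inl f_v0_neg)
      | (i', true) :: _, IH =>
        have hii : i ≠ i' := fun h => hch.rel_head ⟨h, rfl⟩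
        exact ⟨i'.succ, fun h => hii (Fin.succ_injective 7 h).symm, IH⟩
      | (i', false) :: _, IH =>
        refine ⟨0, (Fin.succ_ne_zero i).symm, ?_⟩
        exact entry 0 v' (Or.inr ⟨i'.succ, Fin.succ_ne_zero i', IH⟩)
    · -- b = true : goal `P i.succ (S 0 *ᵥ (prodS ((i,true)::L') *ᵥ v0))`
      show P i.succ (S 0 *ᵥ (prodS ((i, true) :: L') *ᵥ v0))
      rw [hpr]
      have hM : M' (i, true) = S 0 * S i.succ := rfl
      rw [hM, ← Matrix.mulVec_mulVec, S0_S0]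
      refine entry i.succ v' ?_
      match L', IH with
      | [], IH => exact Or.inl (by rw [show v' = v0 from IH]; exact f_v0_neg)
      | (i', true) :: _, IH =>
        refine Or.inr ⟨0, (Fin.succ_ne_zero i).symm, ?_⟩
        have := entry 0 (S 0 *ᵥ v') (Or.inr ⟨i'.succ, Fin.succ_ne_zero i', IH⟩)
        rwa [S0_S0] at this
      | (i', false) :: _, IH =>
        have hii : i ≠ i' := fun h => hch.rel_head ⟨h, rfl⟩
        exact Or.inr ⟨i'.succ, fun h => hii (Fin.succ_injective 7 h).symm, IH⟩

theorem exists_P (L : List (Fin 7 × Bool)) (hch : List.Chain' R L) (hne : L ≠ []) :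
    ∃ j : Fin 8, P j (prodS L *ᵥ v0) := by
  match L, hne with
  | (i, false) :: L', _ => exact ⟨i.succ, mainAux _ hch⟩
  | (i, true) :: L', _ =>
    have h := mainAux _ hch
    have := entry 0 (S 0 *ᵥ (prodS ((i, true) :: L') *ᵥ v0))
      (Or.inr ⟨i.succ, Fin.succ_ne_zero i, h⟩)
    rw [S0_S0] at this
    exact ⟨0, this⟩

theorem prodS_ne_one (L : List (Fin 7 × Bool)) (hch : List.Chain' R L) (hne : L ≠ []) :
    prodS L ≠ 1 := by
  intro h1
  obtain ⟨j, hj⟩ := exists_P L hch hne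
  rw [h1, Matrix.one_mulVec] at hj
  exact absurd hj.1 (not_lt.mpr (le_of_lt (f_v0_neg j)))

theorem chain'_of_noadj : ∀ L : List (Fin 7 × Bool),
    (∀ (L₂ L₃ : List (Fin 7 × Bool)) (x : Fin 7) (b : Bool),
      L ≠ L₂ ++ (x, b) :: (x, !b) :: L₃) → List.Chain' R L
  | [], _ => List.isChain_nil
  | [a], _ => List.isChain_singleton a
  | a :: b :: L, h => by
    show List.IsChain R (a :: b :: L)
    rw [List.isChain_cons_cons]
    constructor
    · intro ⟨h1, h2⟩
      exact h [] L a.1 a.2 (by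
        have : a = (a.1, a.2) := rfl
        have hb : b = (a.1, !a.2) := by
          apply Prod.ext
          · exact h1.symm
          · exact h2
        rw [hb]; rfl)
    · exact chain'_of_noadj (b :: L)
        (fun L₂ L₃ x bb hh => h (a :: L₂) L₃ x bb (by rw [hh]; rfl))

theorem chain'_toWord (w : FreeGroup (Fin 7)) : List.Chain' R w.toWord :=
  chain'_of_noadj _ (fun L₂ L₃ x b hh =>
    FreeGroup.reduce.not (L₁ := w.toWord) (L₂ := L₂) (L₃ := L₃)
      (by rw [FreeGroup.reduce_toWord]; exact hh))

theorem phi_coe (φ : FreeGroup (Fin 7) →* GL (Fin 4) ℤ)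
    (hφ : ∀ i : Fin 7,
      ((φ (FreeGroup.of i)) : Matrix (Fin 4) (Fin 4) ℤ) = S 0 * S i.succ) :
    ∀ L : List (Fin 7 × Bool),
      ((φ (FreeGroup.mk L) : GL (Fin 4) ℤ) : Matrix (Fin 4) (Fin 4) ℤ) = prodS L
  | [] => by
    have : FreeGroup.mk ([] : List (Fin 7 × Bool)) = 1 := FreeGroup.one_eq_mk.symm
    rw [this, _root_.map_one, Units.val_one]; rfl
  | (i, b) :: L => by
    have hsplit : FreeGroup.mk ((i, b) :: L) = FreeGroup.mk [(i, b)] * FreeGroup.mk L := by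
      rw [FreeGroup.mul_mk]; rfl
    rw [hsplit, _root_.map_mul, Units.val_mul, phi_coe φ hφ L]
    have hM : ((φ (FreeGroup.mk [(i, b)]) : GL (Fin 4) ℤ) : Matrix (Fin 4) (Fin 4) ℤ)
        = M' (i, b) := by
      cases b
      · have hmk : FreeGroup.mk [(i, false)] = (FreeGroup.of i)⁻¹ := by
          rw [show (FreeGroup.of i : FreeGroup (Fin 7)) = FreeGroup.mk [(i, true)] from rfl,
            FreeGroup.inv_mk]
          rfl
        rw [hmk, map_inv]
        have hone : ((φ (FreeGroup.of i) : GL (Fin 4) ℤ) : Matrix (Fin 4) (Fin 4) ℤ)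
            * (S i.succ * S 0) = 1 := by
          rw [hφ i]
          calc S 0 * S i.succ * (S i.succ * S 0)
              = S 0 * (S i.succ * S i.succ) * S 0 := by noncomm_ring
            _ = 1 := by rw [S_invol, mul_one, S_invol]
        calc ((φ (FreeGroup.of i))⁻¹ : GL (Fin 4) ℤ).val
            = ((φ (FreeGroup.of i))⁻¹ : GL (Fin 4) ℤ).val
              * (((φ (FreeGroup.of i) : GL (Fin 4) ℤ) : Matrix (Fin 4) (Fin 4) ℤ)
                * (S i.succ * S 0)) := by rw [hone, mul_one]
          _ = (((φ (FreeGroup.of i))⁻¹ : GL (Fin 4) ℤ).val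
                * ((φ (FreeGroup.of i) : GL (Fin 4) ℤ) : Matrix (Fin 4) (Fin 4) ℤ))
                * (S i.succ * S 0) := by rw [mul_assoc]
          _ = M' (i, false) := by
              rw [← Units.val_mul, inv_mul_cancel, Units.val_one, one_mul]; rfl
      · have hmk : FreeGroup.mk [(i, true)] = FreeGroup.of i := rfl
        rw [hmk, hφ i]; rfl
    rw [hM]
    show M' (i, b) * prodS L = prodS ((i, b) :: L)
    rw [prodS, prodS, List.map_cons, List.prod_cons]

end Apollo3Free

/-- The orientation-preserving Apollonian 3-group `A = Ã ∩ SO_Q(ℤ)` is free of rank 7: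
the homomorphism from the free group on seven generators to `GL(4, ℤ)` sending the
`i`-th generator to `S₁ · Sᵢ₊₁` is injective. -/
theorem apollonian3_rotation_group_free
    (φ : FreeGroup (Fin 7) →* GL (Fin 4) ℤ)
    (hφ : ∀ i : Fin 7,
      ((φ (FreeGroup.of i)) : Matrix (Fin 4) (Fin 4) ℤ) = S 0 * S i.succ) :
    Function.Injective φ := by
  rw [injective_iff_map_eq_one]
  intro w hw
  by_contra hne
  have hL : w.toWord ≠ [] := fun h => hne (FreeGroup.toWord_eq_nil_iff.mp h)
  have h1 : Apollo3Free.prodS w.toWord = 1 := by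
    rw [← Apollo3Free.phi_coe φ hφ w.toWord, FreeGroup.mk_toWord, hw, Units.val_one]
  exact Apollo3Free.prodS_ne_one w.toWord (Apollo3Free.chain'_toWord w) hL h1
end

section
/- The group homomorphism from the free group on three generators to SL(2,ℤ) sending the three generators to the parabolic matrices [[1,2],[-2,-3]], [[1,0],[4,1]], and [[-1,2],[-2,3]] is injective; that is, the subgroup Γ_{C₃} of SL(2,ℤ) generated by these three elements is freely generated by them. -/
open Matrix Pointwise

abbrev SL2 := Matrix.SpecialLinearGroup (Fin 2) ℤ
abbrev V := {v : Fin 2 → ℤ // v ≠ 0}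

/-- The parabolic element `[[1,2],[-2,-3]]` fixing `-1`. -/
def P1 : Matrix.SpecialLinearGroup (Fin 2) ℤ :=
  ⟨!![1, 2; -2, -3], by norm_num [Matrix.det_fin_two_of]⟩

/-- The parabolic element `[[1,0],[4,1]]` fixing `0`. -/
def P2 : Matrix.SpecialLinearGroup (Fin 2) ℤ :=
  ⟨!![1, 0; 4, 1], by norm_num [Matrix.det_fin_two_of]⟩

/-- The parabolic element `[[-1,2],[-2,3]]` fixing `1`. -/
def P3 : Matrix.SpecialLinearGroup (Fin 2) ℤ :=
  ⟨!![-1, 2; -2, 3], by norm_num [Matrix.det_fin_two_of]⟩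

lemma aux_ne (g : SL2) (v : Fin 2 → ℤ) (hv : v ≠ 0) :
    (↑g : Matrix (Fin 2) (Fin 2) ℤ).mulVec v ≠ 0 := by
  intro h
  apply hv
  have : v = (↑(g⁻¹) : Matrix (Fin 2) (Fin 2) ℤ).mulVec
      ((↑g : Matrix (Fin 2) (Fin 2) ℤ).mulVec v) := by
    rw [Matrix.mulVec_mulVec, ← Matrix.SpecialLinearGroup.coe_mul, inv_mul_cancel,
      Matrix.SpecialLinearGroup.coe_one, Matrix.one_mulVec]
  rw [this, h, Matrix.mulVec_zero]

instance : SMul SL2 V := ⟨fun g v => ⟨(↑g : Matrix (Fin 2) (Fin 2) ℤ).mulVec v.1, aux_ne g v.1 v.2⟩⟩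

lemma smul_fst (g : SL2) (v : V) :
    (g • v).1 0 = (↑g : Matrix (Fin 2) (Fin 2) ℤ) 0 0 * v.1 0 + (↑g : Matrix (Fin 2) (Fin 2) ℤ) 0 1 * v.1 1 := by
  show ((↑g : Matrix (Fin 2) (Fin 2) ℤ).mulVec v.1) 0 = _
  simp [Matrix.mulVec, dotProduct, Fin.sum_univ_two]

lemma smul_snd (g : SL2) (v : V) :
    (g • v).1 1 = (↑g : Matrix (Fin 2) (Fin 2) ℤ) 1 0 * v.1 0 + (↑g : Matrix (Fin 2) (Fin 2) ℤ) 1 1 * v.1 1 := by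
  show ((↑g : Matrix (Fin 2) (Fin 2) ℤ).mulVec v.1) 1 = _
  simp [Matrix.mulVec, dotProduct, Fin.sum_univ_two]

instance : MulAction SL2 V where
  one_smul v := Subtype.ext (by
    show (↑(1 : SL2) : Matrix (Fin 2) (Fin 2) ℤ).mulVec v.1 = v.1
    simp)
  mul_smul g h v := Subtype.ext (by
    show (↑(g * h) : Matrix (Fin 2) (Fin 2) ℤ).mulVec v.1
      = (↑g : Matrix (Fin 2) (Fin 2) ℤ).mulVec ((↑h : Matrix (Fin 2) (Fin 2) ℤ).mulVec v.1)
    rw [Matrix.SpecialLinearGroup.coe_mul, Matrix.mulVec_mulVec])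

lemma Vnz (u : V) : u.1 0 ≠ 0 ∨ u.1 1 ≠ 0 := by
  by_contra h
  push_neg at h
  exact u.2 (funext fun t => by fin_cases t <;> simp [h.1, h.2])

/-- Ping-pong "attracting" sets. -/
def XS : Fin 3 → Set V
  | 0 => {v | (v.1 0 + v.1 1) * (2 * v.1 0 + v.1 1) < 0}
  | 1 => {v | v.1 0 * (2 * v.1 0 - v.1 1) < 0}
  | 2 => {v | (2 * v.1 0 - v.1 1) * (v.1 0 - v.1 1) ≤ 0 ∧ v.1 0 ≠ v.1 1}

/-- Ping-pong "repelling" sets. -/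
def YS : Fin 3 → Set V
  | 0 => {v | (v.1 0 + v.1 1) * v.1 1 ≤ 0}
  | 1 => {v | (2 * v.1 0 + v.1 1) * v.1 0 ≤ 0 ∧ v.1 1 ≠ 0}
  | 2 => {v | 0 ≤ (v.1 0 - v.1 1) * v.1 1 ∧ v.1 1 ≠ 0}

def fgen : Fin 3 → SL2 := ![P1, P2, P3]

def Q1 : SL2 := ⟨!![-3, -2; 2, 1], by norm_num [Matrix.det_fin_two_of]⟩
def Q2 : SL2 := ⟨!![1, 0; -4, 1], by norm_num [Matrix.det_fin_two_of]⟩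
def Q3 : SL2 := ⟨!![3, -2; 2, -1], by norm_num [Matrix.det_fin_two_of]⟩

lemma P1_inv : P1⁻¹ = Q1 := by
  rw [eq_comm, eq_inv_iff_mul_eq_one]
  ext i j
  rw [Matrix.SpecialLinearGroup.coe_mul]
  fin_cases i <;> fin_cases j <;>
    simp [P1, Q1, Matrix.mul_fin_two, Matrix.SpecialLinearGroup.coe_mul]

lemma P2_inv : P2⁻¹ = Q2 := by
  rw [eq_comm, eq_inv_iff_mul_eq_one]
  ext i j
  rw [Matrix.SpecialLinearGroup.coe_mul]
  fin_cases i <;> fin_cases j <;>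
    simp [P2, Q2, Matrix.mul_fin_two, Matrix.SpecialLinearGroup.coe_mul]

lemma P3_inv : P3⁻¹ = Q3 := by
  rw [eq_comm, eq_inv_iff_mul_eq_one]
  ext i j
  rw [Matrix.SpecialLinearGroup.coe_mul]
  fin_cases i <;> fin_cases j <;>
    simp [P3, Q3, Matrix.mul_fin_two, Matrix.SpecialLinearGroup.coe_mul]

lemma key : Function.Injective (FreeGroup.lift fgen) := by
  apply FreeGroup.injective_lift_of_ping_pong fgen XS YS
  · -- nonempty
    intro i
    fin_cases i
    · exact ⟨⟨![-3, 4], by simp [funext_iff, Fin.forall_fin_two]⟩, by norm_num [XS]⟩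
    · exact ⟨⟨![1, 4], by simp [funext_iff, Fin.forall_fin_two]⟩, by norm_num [XS]⟩
    · exact ⟨⟨![1, 2], by simp [funext_iff, Fin.forall_fin_two]⟩, by norm_num [XS]⟩
  · -- X pairwise disjoint
    refine fun i j hij => Set.disjoint_left.mpr fun {v} h1 h2 => ?_
    set x := v.1 0 with hx
    set y := v.1 1 with hy
    fin_cases i <;> fin_cases j <;>
      simp only [XS, Set.mem_setOf_eq, ← hx, ← hy] at h1 h2 <;>
      [exact hij rfl;
       nlinarith [sq_nonneg (x + y), sq_nonneg x];
       nlinarith [sq_nonneg x, sq_nonneg y];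
       nlinarith [sq_nonneg (x + y), sq_nonneg x];
       exact hij rfl;
       nlinarith [sq_nonneg (2 * x - y)];
       nlinarith [sq_nonneg x, sq_nonneg y];
       nlinarith [sq_nonneg (2 * x - y)];
       exact hij rfl]
  · -- Y pairwise disjoint
    refine fun i j hij => Set.disjoint_left.mpr fun {v} h1 h2 => ?_
    set x := v.1 0 with hx
    set y := v.1 1 with hy
    fin_cases i <;> fin_cases j <;>
      simp only [YS, Set.mem_setOf_eq, ← hx, ← hy] at h1 h2
    · exact hij rfl
    · rcases h2.2.lt_or_gt with h | h <;> nlinarith [sq_nonneg x, sq_nonneg (x + y)]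
    · rcases h2.2.lt_or_gt with h | h <;> nlinarith
    · rcases h1.2.lt_or_gt with h | h <;> nlinarith [sq_nonneg x, sq_nonneg (x + y)]
    · exact hij rfl
    · rcases h2.2.lt_or_gt with h | h <;> nlinarith [sq_nonneg x]
    · rcases h1.2.lt_or_gt with h | h <;> nlinarith
    · rcases h1.2.lt_or_gt with h | h <;> nlinarith [sq_nonneg x]
    · exact hij rfl
  · -- X_i disjoint Y_j
    intro i j
    refine Set.disjoint_left.mpr fun {v} h1 h2 => ?_
    set x := v.1 0 with hx
    set y := v.1 1 with hy
    fin_cases i <;> fin_cases j <;>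
      simp only [XS, YS, Set.mem_setOf_eq, ← hx, ← hy] at h1 h2
    · nlinarith [sq_nonneg (x + y)]
    · nlinarith [sq_nonneg (2 * x + y)]
    · nlinarith [sq_nonneg (x + y), sq_nonneg x, sq_nonneg y]
    · nlinarith [sq_nonneg x, sq_nonneg y]
    · nlinarith [sq_nonneg x]
    · nlinarith [sq_nonneg x, sq_nonneg (x - y)]
    · rcases (sub_ne_zero.mpr h1.2).lt_or_gt with h | h <;>
        nlinarith [sq_nonneg x, sq_nonneg y, sq_nonneg (x - y)]
    · rcases h2.2.lt_or_gt with h | h <;> nlinarith [sq_nonneg x, sq_nonneg (x - y)]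
    · rcases (sub_ne_zero.mpr h1.2).lt_or_gt with h | h <;> nlinarith [sq_nonneg (x - y)]
  · -- hX : fgen i • (YS i)ᶜ ⊆ XS i
    intro i
    fin_cases i
    · -- P1 case
      show P1 • (YS 0)ᶜ ⊆ XS 0
      rintro w hw
      rw [Set.mem_smul_set] at hw
      obtain ⟨u, hu, rfl⟩ := hw
      rw [Set.mem_compl_iff] at hu
      set x := u.1 0 with hx
      set y := u.1 1 with hy
      simp only [XS, YS, Set.mem_setOf_eq, ← hx, ← hy, not_le] at hu ⊢
      have e0 : (P1 • u).1 0 = x + 2 * y := by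
        rw [smul_fst]; norm_num [P1, ← hx, ← hy]
      have e1 : (P1 • u).1 1 = -2 * x + -3 * y := by
        rw [smul_snd]; norm_num [P1, ← hx, ← hy]
      rw [e0, e1]
      nlinarith [hu]
    · -- P2 case
      show P2 • (YS 1)ᶜ ⊆ XS 1
      rintro w hw
      rw [Set.mem_smul_set] at hw
      obtain ⟨u, hu, rfl⟩ := hw
      rw [Set.mem_compl_iff] at hu
      set x := u.1 0 with hx
      set y := u.1 1 with hy
      simp only [XS, YS, Set.mem_setOf_eq, ← hx, ← hy, not_and, not_not] at hu ⊢
      have e0 : (P2 • u).1 0 = x := by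
        rw [smul_fst]; norm_num [P2, ← hx, ← hy]
      have e1 : (P2 • u).1 1 = 4 * x + y := by
        rw [smul_snd]; norm_num [P2, ← hx, ← hy]
      rw [e0, e1]
      by_cases hc : (2 * x + y) * x ≤ 0
      · have hy0 : y = 0 := hu hc
        have hx0 : x ≠ 0 := by
          rcases Vnz u with h | h
          · exact h
          · exact absurd hy0 h
        rcases hx0.lt_or_gt with h | h <;> nlinarith
      · push_neg at hc
        nlinarith
    · -- P3 case
      show P3 • (YS 2)ᶜ ⊆ XS 2
      rintro w hw
      rw [Set.mem_smul_set] at hw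
      obtain ⟨u, hu, rfl⟩ := hw
      rw [Set.mem_compl_iff] at hu
      set x := u.1 0 with hx
      set y := u.1 1 with hy
      simp only [XS, YS, Set.mem_setOf_eq, ← hx, ← hy, not_and, not_not, not_le] at hu ⊢
      have e0 : (P3 • u).1 0 = -x + 2 * y := by
        rw [smul_fst]; norm_num [P3, ← hx, ← hy]
      have e1 : (P3 • u).1 1 = -2 * x + 3 * y := by
        rw [smul_snd]; norm_num [P3, ← hx, ← hy]
      rw [e0, e1]
      by_cases hc : 0 ≤ (x - y) * y
      · have hy0 : y = 0 := hu hc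
        have hx0 : x ≠ 0 := by
          rcases Vnz u with h | h
          · exact h
          · exact absurd hy0 h
        constructor
        · rw [hy0]; ring_nf; norm_num
        · intro h; apply hx0; linarith [hy0]
      · push_neg at hc
        constructor
        · nlinarith
        · intro h
          have hxy : x = y := by linarith
          rw [hxy] at hc
          simp at hc
  · -- hY : (fgen i)⁻¹ • (XS i)ᶜ ⊆ YS i
    intro i
    fin_cases i
    · -- P1⁻¹ case
      show P1⁻¹ • (XS 0)ᶜ ⊆ YS 0
      rw [P1_inv]
      rintro w hw
      rw [Set.mem_smul_set] at hw
      obtain ⟨u, hu, rfl⟩ := hw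
      rw [Set.mem_compl_iff] at hu
      set x := u.1 0 with hx
      set y := u.1 1 with hy
      simp only [XS, YS, Set.mem_setOf_eq, ← hx, ← hy, not_lt] at hu ⊢
      have e0 : (Q1 • u).1 0 = -3 * x + -2 * y := by
        rw [smul_fst]; norm_num [Q1, ← hx, ← hy]
      have e1 : (Q1 • u).1 1 = 2 * x + y := by
        rw [smul_snd]; norm_num [Q1, ← hx, ← hy]
      rw [e0, e1]
      nlinarith [hu]
    · -- P2⁻¹ case
      show P2⁻¹ • (XS 1)ᶜ ⊆ YS 1
      rw [P2_inv]
      rintro w hw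
      rw [Set.mem_smul_set] at hw
      obtain ⟨u, hu, rfl⟩ := hw
      rw [Set.mem_compl_iff] at hu
      set x := u.1 0 with hx
      set y := u.1 1 with hy
      simp only [XS, YS, Set.mem_setOf_eq, ← hx, ← hy, not_lt] at hu ⊢
      have e0 : (Q2 • u).1 0 = x := by
        rw [smul_fst]; norm_num [Q2, ← hx, ← hy]
      have e1 : (Q2 • u).1 1 = -4 * x + y := by
        rw [smul_snd]; norm_num [Q2, ← hx, ← hy]
      rw [e0, e1]
      constructor
      · nlinarith
      · intro h
        have hyx : y = 4 * x := by linarith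
        have hx0 : x = 0 := by nlinarith
        have hy0 : y = 0 := by rw [hyx, hx0]; ring
        rcases Vnz u with h' | h' <;> [exact h' hx0; exact h' hy0]
    · -- P3⁻¹ case
      show P3⁻¹ • (XS 2)ᶜ ⊆ YS 2
      rw [P3_inv]
      rintro w hw
      rw [Set.mem_smul_set] at hw
      obtain ⟨u, hu, rfl⟩ := hw
      rw [Set.mem_compl_iff] at hu
      set x := u.1 0 with hx
      set y := u.1 1 with hy
      simp only [XS, YS, Set.mem_setOf_eq, ← hx, ← hy, not_and, not_not, not_le] at hu ⊢
      have e0 : (Q3 • u).1 0 = 3 * x + -2 * y := by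
        rw [smul_fst]; norm_num [Q3, ← hx, ← hy]
      have e1 : (Q3 • u).1 1 = 2 * x + -y := by
        rw [smul_snd]; norm_num [Q3, ← hx, ← hy]
      rw [e0, e1]
      by_cases hc : (2 * x - y) * (x - y) ≤ 0
      · have hxy : x = y := hu hc
        have hx0 : x ≠ 0 := by
          rcases Vnz u with h | h
          · exact h
          · rw [hxy]; exact h
        constructor
        · rw [hxy]; ring_nf; norm_num
        · intro h
          apply hx0
          rw [hxy] at h ⊢
          linarith
      · push_neg at hc
        constructor
        · nlinarith
        · intro h
          have hyx : y = 2 * x := by linarith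
          rw [hyx] at hc
          nlinarith [sq_nonneg x]

/-- The subgroup `Γ_{C₃}` of `SL(2, ℤ)` is freely generated by the three parabolic
elements `[[1,2],[-2,-3]]`, `[[1,0],[4,1]]`, `[[-1,2],[-2,3]]`: the homomorphism from
the free group on three generators sending the generators to these matrices is
injective. -/
theorem gammaC3_free_on_parabolics
    (φ : FreeGroup (Fin 3) →* Matrix.SpecialLinearGroup (Fin 2) ℤ)
    (hφ0 : φ (FreeGroup.of 0) = P1) (hφ1 : φ (FreeGroup.of 1) = P2)
    (hφ2 : φ (FreeGroup.of 2) = P3) :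
    Function.Injective φ := by
  have hφ : φ = FreeGroup.lift fgen := by
    apply FreeGroup.ext_hom
    intro i
    fin_cases i <;> simp [fgen, hφ0, hφ1, hφ2]
  rw [hφ]
  exact key
end

section
/- Let G be a finite group and S ⊆ G a finite symmetric generating set (S = S⁻¹). Let G₁,…,G_k be subgroups of G such that every g ∈ G can be written g = g₁g₂⋯g_k with gᵢ ∈ Gᵢ, and suppose each S ∩ Gᵢ is nonempty. Suppose ε₁,…,ε_k ≥ 0 are such that for each i and every function fᵢ : Gᵢ → ℝ with Σ_{x∈Gᵢ} fᵢ(x) = 0 one has ⟨(I - M_{S∩Gᵢ})fᵢ, fᵢ⟩ ≥ εᵢ·⟨fᵢ, fᵢ⟩. Then for every f : G → ℝ with Σ_{x∈G} f(x) = 0, one has ⟨(I - M_S)f, f⟩ ≥ min_{1≤i≤k} (|S ∩ Gᵢ|/|S| · εᵢ/(2k²)) · ⟨f, f⟩. Equivalently, 1 - λ₁'(G,S) ≥ min_i { (|S∩Gᵢ|/|S|) · (1 - λ₁'(Gᵢ, S∩Gᵢ))/(2k²) }. -/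
open Finset


lemma varju_sum_comp_mulLeft {G : Type*} [Group G] [Fintype G] (c : G) (f : G → ℝ) :
    ∑ x, f (c * x) = ∑ x, f x := Equiv.sum_comp (Equiv.mulLeft c) f

lemma varju_sum_comp_mulRight {G : Type*} [Group G] [Fintype G] (c : G) (f : G → ℝ) :
    ∑ x, f (x * c) = ∑ x, f x := Equiv.sum_comp (Equiv.mulRight c) f

lemma varju_dirichlet {G : Type*} [Group G] [Fintype G]
    (T : Finset G) (hT : T.Nonempty) (f : G → ℝ) :
    ∑ x, (f x - (T.card : ℝ)⁻¹ * ∑ t ∈ T, f (t * x)) * f x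
      = (2 * (T.card : ℝ))⁻¹ * ∑ t ∈ T, ∑ x, (f (t * x) - f x) ^ 2 := by
  have hc : (T.card : ℝ) ≠ 0 := by
    exact_mod_cast Nat.cast_ne_zero.mpr (Finset.card_pos.mpr hT).ne'
  have key : ∀ t : G, ∑ x, (f (t * x) - f x) ^ 2
      = 2 * (∑ x, f x * f x) - 2 * ∑ x, f (t * x) * f x := by
    intro t
    have h1 : ∑ x, f (t * x) * f (t * x) = ∑ x, f x * f x :=
      varju_sum_comp_mulLeft t (fun x => f x * f x)
    calc ∑ x, (f (t * x) - f x) ^ 2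
        = ∑ x, (f (t * x) * f (t * x) + f x * f x - 2 * (f (t * x) * f x)) := by
          apply Finset.sum_congr rfl; intros; ring
      _ = (∑ x, f (t * x) * f (t * x)) + (∑ x, f x * f x) - 2 * ∑ x, f (t * x) * f x := by
          rw [Finset.sum_sub_distrib, Finset.sum_add_distrib, Finset.mul_sum]
      _ = 2 * (∑ x, f x * f x) - 2 * ∑ x, f (t * x) * f x := by rw [h1]; ring
  have lhs : ∑ x, (f x - (T.card : ℝ)⁻¹ * ∑ t ∈ T, f (t * x)) * f x
      = (∑ x, f x * f x) - (T.card : ℝ)⁻¹ * ∑ t ∈ T, ∑ x, f (t * x) * f x := by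
    calc ∑ x, (f x - (T.card : ℝ)⁻¹ * ∑ t ∈ T, f (t * x)) * f x
        = ∑ x, (f x * f x - (T.card : ℝ)⁻¹ * ∑ t ∈ T, f (t * x) * f x) := by
          apply Finset.sum_congr rfl; intro x _
          rw [sub_mul, mul_assoc, Finset.sum_mul]
      _ = (∑ x, f x * f x) - (T.card : ℝ)⁻¹ * ∑ x, ∑ t ∈ T, f (t * x) * f x := by
          rw [Finset.sum_sub_distrib, Finset.mul_sum]
      _ = (∑ x, f x * f x) - (T.card : ℝ)⁻¹ * ∑ t ∈ T, ∑ x, f (t * x) * f x := by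
          rw [Finset.sum_comm]
  rw [lhs]
  set A := ∑ x, f x * f x with hA
  set B := ∑ t ∈ T, ∑ x, f (t * x) * f x with hB
  have rhs : ∑ t ∈ T, ∑ x, (f (t * x) - f x) ^ 2 = 2 * (T.card : ℝ) * A - 2 * B := by
    rw [Finset.sum_congr rfl (fun t _ => key t), Finset.sum_sub_distrib, Finset.sum_const,
      ← Finset.mul_sum, nsmul_eq_mul, hB]
    ring
  rw [rhs]
  field_simp

lemma varju_subgroup_sum_right {G : Type*} [Group G] [Fintype G] [DecidableEq G]
    (H : Subgroup G) [DecidablePred (· ∈ H)] (t : G) (ht : t ∈ H) (g : G → ℝ) :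
    ∑ h ∈ univ.filter (· ∈ H), g (h * t) = ∑ h ∈ univ.filter (· ∈ H), g h := by
  apply Finset.sum_bij' (fun h _ => h * t) (fun h _ => h * t⁻¹)
  · intro a ha
    simp only [Finset.mem_filter, Finset.mem_univ, true_and] at ha ⊢
    exact H.mul_mem ha ht
  · intro a ha
    simp only [Finset.mem_filter, Finset.mem_univ, true_and] at ha ⊢
    exact H.mul_mem ha (H.inv_mem ht)
  · intro a _; group
  · intro a _; group
  · intro a _; rfl

lemma varju_subgroup_sum_left {G : Type*} [Group G] [Fintype G] [DecidableEq G]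
    (H : Subgroup G) [DecidablePred (· ∈ H)] (t : G) (ht : t ∈ H) (g : G → ℝ) :
    ∑ h ∈ univ.filter (· ∈ H), g (t * h) = ∑ h ∈ univ.filter (· ∈ H), g h := by
  apply Finset.sum_bij' (fun h _ => t * h) (fun h _ => t⁻¹ * h)
  · intro a ha
    simp only [Finset.mem_filter, Finset.mem_univ, true_and] at ha ⊢
    exact H.mul_mem ht ha
  · intro a ha
    simp only [Finset.mem_filter, Finset.mem_univ, true_and] at ha ⊢
    exact H.mul_mem (H.inv_mem ht) ha
  · intro a _; group
  · intro a _; group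
  · intro a _; rfl

lemma varju_restrict {G : Type*} [Group G] [Fintype G] [DecidableEq G]
    (S T : Finset G) (hT : T.Nonempty) (hTS : T ⊆ S) (f : G → ℝ) :
    ((T.card : ℝ) / (S.card : ℝ)) *
        ∑ x, (f x - (T.card : ℝ)⁻¹ * ∑ t ∈ T, f (t * x)) * f x ≤
      ∑ x, (f x - (S.card : ℝ)⁻¹ * ∑ t ∈ S, f (t * x)) * f x := by
  have hS : S.Nonempty := hT.mono hTS
  have hTc : (0:ℝ) < T.card := by exact_mod_cast Finset.card_pos.mpr hT
  have hSc : (0:ℝ) < S.card := by exact_mod_cast Finset.card_pos.mpr hS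
  rw [varju_dirichlet S hS, varju_dirichlet T hT]
  have hsub : ∑ t ∈ T, ∑ x, (f (t * x) - f x) ^ 2
      ≤ ∑ t ∈ S, ∑ x, (f (t * x) - f x) ^ 2 := by
    apply Finset.sum_le_sum_of_subset_of_nonneg hTS
    intros; positivity
  calc ((T.card : ℝ) / (S.card : ℝ)) * ((2 * (T.card : ℝ))⁻¹ * ∑ t ∈ T, ∑ x, (f (t * x) - f x) ^ 2)
      = (2 * (S.card : ℝ))⁻¹ * ∑ t ∈ T, ∑ x, (f (t * x) - f x) ^ 2 := by
        field_simp
    _ ≤ (2 * (S.card : ℝ))⁻¹ * ∑ t ∈ S, ∑ x, (f (t * x) - f x) ^ 2 := by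
        apply mul_le_mul_of_nonneg_left hsub (by positivity)

lemma varju_gap_lift {G : Type*} [Group G] [Fintype G] [DecidableEq G]
    (H : Subgroup G) [DecidablePred (· ∈ H)] (T : Finset G) (hT : T.Nonempty)
    (hTH : ∀ t ∈ T, t ∈ H) (εi : ℝ)
    (hgap : ∀ f : G → ℝ, (∀ x, x ∉ H → f x = 0) → (∑ x, f x) = 0 →
      εi * (∑ x, f x * f x) ≤
        ∑ x, (f x - (T.card : ℝ)⁻¹ * ∑ t ∈ T, f (t * x)) * f x)
    (f : G → ℝ) :
    εi * ∑ x, (f x - (((univ : Finset G).filter (· ∈ H)).card : ℝ)⁻¹ *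
        ∑ h ∈ (univ : Finset G).filter (· ∈ H), f (h * x)) ^ 2 ≤
      ∑ x, (f x - (T.card : ℝ)⁻¹ * ∑ t ∈ T, f (t * x)) * f x := by
  classical
  set HF := (univ : Finset G).filter (· ∈ H) with hHF
  have h1H : (1:G) ∈ HF := by simp [hHF, H.one_mem]
  have hm0 : 0 < HF.card := Finset.card_pos.mpr ⟨1, h1H⟩
  have hm : ((HF.card : ℝ)) ≠ 0 := by exact_mod_cast hm0.ne'
  have hTc : ((T.card : ℝ)) ≠ 0 := by
    exact_mod_cast (Finset.card_pos.mpr hT).ne'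
  set P : G → ℝ := fun x => (HF.card : ℝ)⁻¹ * ∑ h ∈ HF, f (h * x) with hP
  set A : G → ℝ := fun z => f z - (T.card : ℝ)⁻¹ * ∑ t ∈ T, f (t * z) with hAdef
  have hPinv : ∀ t, t ∈ H → ∀ x, P (t * x) = P x := by
    intro t ht x
    simp only [hP]
    congr 1
    calc ∑ h ∈ HF, f (h * (t * x)) = ∑ h ∈ HF, (fun y => f (y * x)) (h * t) := by
          apply Finset.sum_congr rfl; intro h _; simp only [← mul_assoc]
      _ = ∑ h ∈ HF, f (h * x) := by
          rw [hHF]; exact varju_subgroup_sum_right H t ht (fun y => f (y * x))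
  have key : ∀ c : G, εi * ∑ y ∈ HF, (f (y * c) - P c) ^ 2
      ≤ ∑ y ∈ HF, A (y * c) * f (y * c) := by
    intro c
    set F : G → ℝ := fun y => if y ∈ H then f (y * c) - P c else 0 with hF
    have hsupp : ∀ x, x ∉ H → F x = 0 := by intro x hx; simp [hF, hx]
    have hsumHF : ∑ y ∈ HF, f (y * c) = (HF.card : ℝ) * P c := by
      simp only [hP]
      rw [← mul_assoc, mul_inv_cancel₀ hm, one_mul]
    have hsum : ∑ y, F y = 0 := by
      simp only [hF]
      rw [← Finset.sum_filter, ← hHF, Finset.sum_sub_distrib, Finset.sum_const,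
        nsmul_eq_mul, hsumHF, sub_self]
    have hgapF := hgap F hsupp hsum
    have hL : ∑ y, F y * F y = ∑ y ∈ HF, (f (y * c) - P c) ^ 2 := by
      have hpt : ∀ y : G, F y * F y
          = if y ∈ H then (f (y * c) - P c) ^ 2 else 0 := by
        intro y; simp only [hF]; split_ifs <;> ring
      rw [Finset.sum_congr rfl (fun y _ => hpt y), ← Finset.sum_filter, ← hHF]
    have hA0 : ∑ y ∈ HF, A (y * c) = 0 := by
      simp only [hAdef]
      rw [Finset.sum_sub_distrib, ← Finset.mul_sum, Finset.sum_comm]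
      have each : ∀ t ∈ T, ∑ y ∈ HF, f (t * (y * c)) = ∑ y ∈ HF, f (y * c) := by
        intro t ht
        calc ∑ y ∈ HF, f (t * (y * c)) = ∑ y ∈ HF, (fun w => f (w * c)) (t * y) := by
              apply Finset.sum_congr rfl; intro y _; simp only [← mul_assoc]
          _ = ∑ y ∈ HF, f (y * c) := by
              rw [hHF]; exact varju_subgroup_sum_left H t (hTH t ht) (fun w => f (w * c))
      rw [Finset.sum_congr rfl each, Finset.sum_const, nsmul_eq_mul, ← mul_assoc,
        inv_mul_cancel₀ hTc, one_mul, sub_self]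
    have hR : ∑ y, (F y - (T.card : ℝ)⁻¹ * ∑ t ∈ T, F (t * y)) * F y
        = ∑ y ∈ HF, A (y * c) * f (y * c) := by
      have hrestrict : ∑ y ∈ HF, (F y - (T.card : ℝ)⁻¹ * ∑ t ∈ T, F (t * y)) * F y
          = ∑ y, (F y - (T.card : ℝ)⁻¹ * ∑ t ∈ T, F (t * y)) * F y := by
        apply Finset.sum_subset (Finset.subset_univ HF)
        intro x _ hx
        have hxH : x ∉ H := by simpa [hHF] using hx
        simp [hF, hxH]
      rw [← hrestrict]
      have hpt : ∀ y ∈ HF, (F y - (T.card : ℝ)⁻¹ * ∑ t ∈ T, F (t * y)) * F y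
          = A (y * c) * (f (y * c) - P c) := by
        intro y hy
        have hyH : y ∈ H := by simpa [hHF] using hy
        have hFy : F y = f (y * c) - P c := by simp [hF, hyH]
        have hFty : ∀ t ∈ T, F (t * y) = f (t * (y * c)) - P c := by
          intro t ht
          have : t * y ∈ H := H.mul_mem (hTH t ht) hyH
          simp [hF, this, mul_assoc]
        have hsumT : ∑ t ∈ T, F (t * y)
            = (∑ t ∈ T, f (t * (y * c))) - (T.card : ℝ) * P c := by
          rw [Finset.sum_congr rfl hFty, Finset.sum_sub_distrib, Finset.sum_const,
            nsmul_eq_mul]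
        rw [hFy, hsumT, hAdef]
        have : (T.card : ℝ)⁻¹ * ((∑ t ∈ T, f (t * (y * c))) - (T.card : ℝ) * P c)
            = (T.card : ℝ)⁻¹ * (∑ t ∈ T, f (t * (y * c))) - P c := by
          field_simp
        rw [this]
        ring
      rw [Finset.sum_congr rfl hpt]
      have : ∑ y ∈ HF, A (y * c) * (f (y * c) - P c)
          = ∑ y ∈ HF, A (y * c) * f (y * c) - P c * ∑ y ∈ HF, A (y * c) := by
        rw [Finset.mul_sum, ← Finset.sum_sub_distrib]
        apply Finset.sum_congr rfl; intros; ring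
      rw [this, hA0, mul_zero, sub_zero]
    rw [hL, hR] at hgapF
    exact hgapF
  -- sum the per-coset inequality over all c
  have hsummed : εi * ∑ c, ∑ y ∈ HF, (f (y * c) - P c) ^ 2
      ≤ ∑ c, ∑ y ∈ HF, A (y * c) * f (y * c) := by
    rw [Finset.mul_sum]
    exact Finset.sum_le_sum fun c _ => by
      have := key c
      rw [Finset.mul_sum] at this
      simpa [Finset.mul_sum] using this
  have hLtot : ∑ c, ∑ y ∈ HF, (f (y * c) - P c) ^ 2
      = (HF.card : ℝ) * ∑ x, (f x - P x) ^ 2 := by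
    rw [Finset.sum_comm]
    have : ∀ y ∈ HF, ∑ c, (f (y * c) - P c) ^ 2 = ∑ x, (f x - P x) ^ 2 := by
      intro y hy
      have hyH : y ∈ H := by simpa [hHF] using hy
      calc ∑ c, (f (y * c) - P c) ^ 2 = ∑ c, (f (y * c) - P (y * c)) ^ 2 := by
            apply Finset.sum_congr rfl; intro c _; rw [hPinv y hyH c]
        _ = ∑ x, (f x - P x) ^ 2 :=
            varju_sum_comp_mulLeft y (fun x => (f x - P x) ^ 2)
    rw [Finset.sum_congr rfl this, Finset.sum_const, nsmul_eq_mul]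
  have hRtot : ∑ c, ∑ y ∈ HF, A (y * c) * f (y * c)
      = (HF.card : ℝ) * ∑ x, A x * f x := by
    rw [Finset.sum_comm]
    have : ∀ y ∈ HF, ∑ c, A (y * c) * f (y * c) = ∑ x, A x * f x := by
      intro y _
      exact varju_sum_comp_mulLeft y (fun x => A x * f x)
    rw [Finset.sum_congr rfl this, Finset.sum_const, nsmul_eq_mul]
  rw [hLtot, hRtot] at hsummed
  have hmpos : (0:ℝ) < HF.card := by exact_mod_cast hm0
  have final : εi * ∑ x, (f x - P x) ^ 2 ≤ ∑ x, A x * f x := by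
    have := hsummed
    rw [show εi * ((HF.card : ℝ) * ∑ x, (f x - P x) ^ 2)
        = (HF.card : ℝ) * (εi * ∑ x, (f x - P x) ^ 2) by ring] at this
    exact le_of_mul_le_mul_left this hmpos
  simpa only [hP, hAdef] using final

lemma varju_Pinv {G : Type*} [Group G] [Fintype G] [DecidableEq G]
    (H : Subgroup G) [DecidablePred (· ∈ H)] (f : G → ℝ) (t : G) (ht : t ∈ H) (x : G) :
    ∑ h ∈ (univ : Finset G).filter (· ∈ H), f (h * (t * x))
      = ∑ h ∈ (univ : Finset G).filter (· ∈ H), f (h * x) := by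
  calc ∑ h ∈ (univ : Finset G).filter (· ∈ H), f (h * (t * x))
      = ∑ h ∈ (univ : Finset G).filter (· ∈ H), (fun y => f (y * x)) (h * t) := by
        apply Finset.sum_congr rfl; intro h _; simp only [← mul_assoc]
    _ = ∑ h ∈ (univ : Finset G).filter (· ∈ H), f (h * x) :=
        varju_subgroup_sum_right H t ht (fun y => f (y * x))

lemma varju_key {G : Type*} [Group G] [Fintype G] [DecidableEq G]
    (k : ℕ) (hk : 0 < k) (Gs : Fin k → Subgroup G) [inst : ∀ i, DecidablePred (· ∈ Gs i)]
    (hfact : ∀ g : G, ∃ gs : Fin k → G, (∀ i, gs i ∈ Gs i) ∧ g = (List.ofFn gs).prod)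
    (f : G → ℝ) (hf : (∑ x, f x) = 0) :
    ∑ x, f x * f x ≤ 2 * (k : ℝ) * ∑ i : Fin k,
      ∑ x, (f x - (((univ : Finset G).filter (· ∈ Gs i)).card : ℝ)⁻¹ *
        ∑ h ∈ (univ : Finset G).filter (· ∈ Gs i), f (h * x)) ^ 2 := by
  classical
  set P : Fin k → G → ℝ := fun i x =>
    (((univ : Finset G).filter (· ∈ Gs i)).card : ℝ)⁻¹ *
      ∑ h ∈ (univ : Finset G).filter (· ∈ Gs i), f (h * x) with hP
  set V : Fin k → ℝ := fun i => ∑ x, (f x - P i x) ^ 2 with hV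
  have hVgoal : ∑ i : Fin k, ∑ x, (f x -
      (((univ : Finset G).filter (· ∈ Gs i)).card : ℝ)⁻¹ *
        ∑ h ∈ (univ : Finset G).filter (· ∈ Gs i), f (h * x)) ^ 2 = ∑ i, V i := rfl
  rw [hVgoal]
  have hn0 : 0 < Fintype.card G := Fintype.card_pos
  have hn : ((Fintype.card G : ℝ)) ≠ 0 := by exact_mod_cast hn0.ne'
  -- Step 1
  have step1 : ∑ g : G, ∑ x, (f (g * x) - f x) ^ 2
      = 2 * (Fintype.card G : ℝ) * ∑ x, f x * f x := by
    have key : ∀ g : G, ∑ x, (f (g * x) - f x) ^ 2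
        = 2 * (∑ x, f x * f x) - 2 * ∑ x, f (g * x) * f x := by
      intro g
      have h1 : ∑ x, f (g * x) * f (g * x) = ∑ x, f x * f x :=
        varju_sum_comp_mulLeft g (fun x => f x * f x)
      calc ∑ x, (f (g * x) - f x) ^ 2
          = ∑ x, (f (g * x) * f (g * x) + f x * f x - 2 * (f (g * x) * f x)) := by
            apply Finset.sum_congr rfl; intros; ring
        _ = (∑ x, f (g * x) * f (g * x)) + (∑ x, f x * f x) - 2 * ∑ x, f (g * x) * f x := by
            rw [Finset.sum_sub_distrib, Finset.sum_add_distrib, Finset.mul_sum]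
        _ = 2 * (∑ x, f x * f x) - 2 * ∑ x, f (g * x) * f x := by rw [h1]; ring
    have hzero : ∑ g : G, ∑ x, f (g * x) * f x = 0 := by
      rw [Finset.sum_comm]
      have : ∀ x : G, ∑ g : G, f (g * x) * f x = 0 := by
        intro x
        rw [← Finset.sum_mul]
        have : ∑ g : G, f (g * x) = ∑ g : G, f g :=
          Equiv.sum_comp (Equiv.mulRight x) f
        rw [this, hf, zero_mul]
      rw [Finset.sum_congr rfl (fun x _ => this x), Finset.sum_const, smul_zero]
    rw [Finset.sum_congr rfl (fun g _ => key g), Finset.sum_sub_distrib,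
      Finset.sum_const, ← Finset.mul_sum, hzero, mul_zero, sub_zero, nsmul_eq_mul,
      Fintype.card]
    ring
  -- Step 2
  have step2 : ∀ g : G, ∑ x, (f (g * x) - f x) ^ 2 ≤ (k : ℝ) * ∑ i : Fin k, (4 * V i) := by
    intro g
    obtain ⟨gs, hgs, hprod⟩ := hfact g
    set q : ℕ → G := fun j => ((List.ofFn gs).drop j).prod with hq
    have hq0 : q 0 = g := by simp [hq, ← hprod]
    have hqk : q k = 1 := by
      simp only [hq]
      rw [List.drop_eq_nil_of_le (by simp), List.prod_nil]
    have hstep : ∀ j (hj : j < k), q j = gs ⟨j, hj⟩ * q (j + 1) := by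
      intro j hj
      have hlen : j < (List.ofFn gs).length := by simpa using hj
      simp only [hq]
      rw [List.drop_eq_getElem_cons hlen, List.prod_cons]
      congr 1
      simp
    have htel : ∀ x : G, f (g * x) - f x
        = ∑ j ∈ range k, (f (q j * x) - f (q (j + 1) * x)) := by
      intro x
      rw [Finset.sum_range_sub' (fun j => f (q j * x)) k, hq0, hqk, one_mul]
    have hcs : ∀ x : G, (f (g * x) - f x) ^ 2
        ≤ (k : ℝ) * ∑ j ∈ range k, (f (q j * x) - f (q (j + 1) * x)) ^ 2 := by
      intro x
      rw [htel x]
      have := sq_sum_le_card_mul_sum_sq (s := range k)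
        (f := fun j => f (q j * x) - f (q (j + 1) * x))
      simpa using this
    set Vn : ℕ → ℝ := fun j => if h : j < k then V ⟨j, h⟩ else 0 with hVn
    have hsum_j : ∀ j ∈ range k, ∑ x, (f (q j * x) - f (q (j + 1) * x)) ^ 2
        ≤ 4 * Vn j := by
      intro j hjr
      have hj : j < k := Finset.mem_range.mp hjr
      set i : Fin k := ⟨j, hj⟩ with hi
      have hPq : ∀ x : G, P i (q j * x) = P i (q (j + 1) * x) := by
        intro x
        rw [hstep j hj, mul_assoc]
        simp only [hP]
        rw [varju_Pinv (Gs i) f (gs i) (hgs i) (q (j + 1) * x)]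
      have hpt : ∀ x : G, (f (q j * x) - f (q (j + 1) * x)) ^ 2
          ≤ 2 * (f (q j * x) - P i (q j * x)) ^ 2
            + 2 * (f (q (j + 1) * x) - P i (q (j + 1) * x)) ^ 2 := by
        intro x
        rw [← hPq x]
        nlinarith [sq_nonneg (f (q j * x) + f (q (j + 1) * x) - 2 * P i (q j * x))]
      have hVj1 : ∑ x, (f (q j * x) - P i (q j * x)) ^ 2 = V i := by
        simp only [hV]
        exact varju_sum_comp_mulLeft (q j) (fun x => (f x - P i x) ^ 2)
      have hVj2 : ∑ x, (f (q (j + 1) * x) - P i (q (j + 1) * x)) ^ 2 = V i := by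
        simp only [hV]
        exact varju_sum_comp_mulLeft (q (j + 1)) (fun x => (f x - P i x) ^ 2)
      calc ∑ x, (f (q j * x) - f (q (j + 1) * x)) ^ 2
          ≤ ∑ x, (2 * (f (q j * x) - P i (q j * x)) ^ 2
              + 2 * (f (q (j + 1) * x) - P i (q (j + 1) * x)) ^ 2) :=
            Finset.sum_le_sum fun x _ => hpt x
        _ = 2 * (∑ x, (f (q j * x) - P i (q j * x)) ^ 2)
              + 2 * ∑ x, (f (q (j + 1) * x) - P i (q (j + 1) * x)) ^ 2 := by
            rw [Finset.sum_add_distrib, Finset.mul_sum, Finset.mul_sum]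
        _ = 4 * Vn j := by rw [hVj1, hVj2, hVn]; simp only [hj, dif_pos]; ring
    have hVnsum : ∑ j ∈ range k, Vn j = ∑ i : Fin k, V i := by
      rw [← Fin.sum_univ_eq_sum_range]
      apply Finset.sum_congr rfl
      intro i _
      simp [hVn, i.isLt]
    calc ∑ x, (f (g * x) - f x) ^ 2
        ≤ ∑ x, (k : ℝ) * ∑ j ∈ range k, (f (q j * x) - f (q (j + 1) * x)) ^ 2 :=
          Finset.sum_le_sum fun x _ => hcs x
      _ = (k : ℝ) * ∑ j ∈ range k, ∑ x, (f (q j * x) - f (q (j + 1) * x)) ^ 2 := by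
          rw [← Finset.mul_sum, Finset.sum_comm]
      _ ≤ (k : ℝ) * ∑ j ∈ range k, (4 * Vn j) := by
          apply mul_le_mul_of_nonneg_left _ (by positivity)
          exact Finset.sum_le_sum hsum_j
      _ = (k : ℝ) * ∑ i : Fin k, (4 * V i) := by
          rw [← Finset.mul_sum, ← Finset.mul_sum, hVnsum]
  -- combine
  have htot : 2 * (Fintype.card G : ℝ) * ∑ x, f x * f x
      ≤ (Fintype.card G : ℝ) * ((k : ℝ) * ∑ i : Fin k, (4 * V i)) := by
    rw [← step1]
    calc ∑ g : G, ∑ x, (f (g * x) - f x) ^ 2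
        ≤ ∑ g : G, (k : ℝ) * ∑ i : Fin k, (4 * V i) :=
          Finset.sum_le_sum fun g _ => step2 g
      _ = (Fintype.card G : ℝ) * ((k : ℝ) * ∑ i : Fin k, (4 * V i)) := by
          rw [Finset.sum_const, nsmul_eq_mul, Fintype.card]
  have h4 : ∑ i : Fin k, (4 * V i) = 4 * ∑ i, V i := by rw [← Finset.mul_sum]
  rw [h4] at htot
  nlinarith [htot, Fintype.card_pos (α := G), (by exact_mod_cast hn0 : (0:ℝ) < Fintype.card G)]

/-- **Varjú's Lemma.** Let `G` be a finite group, `S` a finite symmetric generating set,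
and `G₁, …, G_k` subgroups such that every `g ∈ G` factors as `g = g₁⋯g_k` with
`gᵢ ∈ Gᵢ`, each `S ∩ Gᵢ` nonempty. If for each `i` every mean-zero function supported
on `Gᵢ` satisfies the spectral gap `⟨(I - M_{S∩Gᵢ})f, f⟩ ≥ εᵢ ⟨f, f⟩`, then every
mean-zero `f : G → ℝ` satisfies
`⟨(I - M_S)f, f⟩ ≥ min_i (|S∩Gᵢ|/|S| · εᵢ/(2k²)) ⟨f, f⟩`. -/
theorem varju_lemma {G : Type*} [Group G] [Fintype G] [DecidableEq G]
    (S : Finset G) (hSne : S.Nonempty) (hSsym : ∀ s ∈ S, s⁻¹ ∈ S)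
    (hSgen : Subgroup.closure (S : Set G) = ⊤)
    (k : ℕ) (hk : 0 < k) (Gs : Fin k → Subgroup G)
    [inst : ∀ i, DecidablePred (· ∈ Gs i)]
    (hfact : ∀ g : G, ∃ gs : Fin k → G, (∀ i, gs i ∈ Gs i) ∧ g = (List.ofFn gs).prod)
    (hSGne : ∀ i, (S.filter (· ∈ Gs i)).Nonempty)
    (ε : Fin k → ℝ) (hε : ∀ i, 0 ≤ ε i)
    (hgap : ∀ i, ∀ f : G → ℝ, (∀ x, x ∉ Gs i → f x = 0) → (∑ x, f x) = 0 →
      ε i * (∑ x, f x * f x) ≤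
        ∑ x, (f x - ((S.filter (· ∈ Gs i)).card : ℝ)⁻¹ *
          ∑ t ∈ S.filter (· ∈ Gs i), f (t * x)) * f x)
    (f : G → ℝ) (hf : (∑ x, f x) = 0) :
    (⨅ i : Fin k, ((S.filter (· ∈ Gs i)).card : ℝ) / (S.card : ℝ) *
        (ε i / (2 * (k : ℝ) ^ 2))) * (∑ x, f x * f x) ≤
      ∑ x, (f x - (S.card : ℝ)⁻¹ * ∑ t ∈ S, f (t * x)) * f x := by
  classical
  have hkR : (0:ℝ) < (k : ℝ) := by exact_mod_cast hk
  have h2k2 : (0:ℝ) < 2 * (k : ℝ) ^ 2 := by positivity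
  set V : Fin k → ℝ := fun i =>
    ∑ x, (f x - (((univ : Finset G).filter (· ∈ Gs i)).card : ℝ)⁻¹ *
      ∑ h ∈ (univ : Finset G).filter (· ∈ Gs i), f (h * x)) ^ 2 with hV
  have hkey : ∑ x, f x * f x ≤ 2 * (k : ℝ) * ∑ i, V i :=
    varju_key k hk Gs hfact f hf
  have hne : (univ : Finset (Fin k)).Nonempty := ⟨⟨0, hk⟩, Finset.mem_univ _⟩
  obtain ⟨j, -, hj⟩ : ∃ j ∈ (univ : Finset (Fin k)),
      (∑ i, V i) / (k : ℝ) ≤ V j := by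
    apply Finset.exists_le_of_sum_le hne
    rw [Finset.sum_const, nsmul_eq_mul, Finset.card_univ, Fintype.card_fin,
      mul_div_cancel₀ _ hkR.ne']
  have hVsum : ∑ i, V i ≤ (k : ℝ) * V j := (div_le_iff₀' hkR).mp hj
  have hSQ : ∑ x, f x * f x ≤ 2 * (k : ℝ) ^ 2 * V j := by nlinarith
  have hSQ0 : (0:ℝ) ≤ ∑ x, f x * f x :=
    Finset.sum_nonneg fun x _ => mul_self_nonneg (f x)
  have hlift : ε j * V j ≤
      ∑ x, (f x - ((S.filter (· ∈ Gs j)).card : ℝ)⁻¹ *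
        ∑ t ∈ S.filter (· ∈ Gs j), f (t * x)) * f x := by
    have := varju_gap_lift (Gs j) (S.filter (· ∈ Gs j)) (hSGne j)
      (fun t ht => (Finset.mem_filter.mp ht).2) (ε j) (hgap j) f
    simpa [hV] using this
  have hrestr := varju_restrict S (S.filter (· ∈ Gs j)) (hSGne j)
    (Finset.filter_subset _ _) f
  have hratio : (0:ℝ) ≤ ((S.filter (· ∈ Gs j)).card : ℝ) / (S.card : ℝ) := by positivity
  have hstep : ε j * (∑ x, f x * f x) / (2 * (k : ℝ) ^ 2) ≤
      ∑ x, (f x - ((S.filter (· ∈ Gs j)).card : ℝ)⁻¹ *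
        ∑ t ∈ S.filter (· ∈ Gs j), f (t * x)) * f x := by
    rw [div_le_iff₀ h2k2]
    nlinarith [mul_le_mul_of_nonneg_left hSQ (hε j),
      mul_le_mul_of_nonneg_left hlift h2k2.le]
  have hchain : ((S.filter (· ∈ Gs j)).card : ℝ) / (S.card : ℝ) *
      (ε j / (2 * (k : ℝ) ^ 2)) * (∑ x, f x * f x) ≤
      ∑ x, (f x - (S.card : ℝ)⁻¹ * ∑ t ∈ S, f (t * x)) * f x := by
    calc ((S.filter (· ∈ Gs j)).card : ℝ) / (S.card : ℝ) *
        (ε j / (2 * (k : ℝ) ^ 2)) * (∑ x, f x * f x)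
        = ((S.filter (· ∈ Gs j)).card : ℝ) / (S.card : ℝ) *
          (ε j * (∑ x, f x * f x) / (2 * (k : ℝ) ^ 2)) := by ring
      _ ≤ ((S.filter (· ∈ Gs j)).card : ℝ) / (S.card : ℝ) *
          (∑ x, (f x - ((S.filter (· ∈ Gs j)).card : ℝ)⁻¹ *
            ∑ t ∈ S.filter (· ∈ Gs j), f (t * x)) * f x) :=
          mul_le_mul_of_nonneg_left hstep hratio
      _ ≤ _ := hrestr
  refine le_trans (mul_le_mul_of_nonneg_right ?_ hSQ0) hchain
  exact ciInf_le (Finite.bddBelow_range _) j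
end

section
/- There is an absolute constant C₀ > 0 with the following property. Let A, B, C, b be integers with b ≠ 0, gcd(A, 2B, C) = 1, and B² - AC = -2b² (so the binary quadratic form f(x,y) = Ax² + 2Bxy + Cy² is primitive of discriminant -8b²). Then for every positive integer d dividing 2b² and every integer W ≥ 1, the number of pairs (m,n) with 1 ≤ m ≤ W, 1 ≤ n ≤ W, and Am² - 2Bmn + Cn² ≡ 0 (mod d) is at most C₀·(W²·d^{-1/2} + W). -/
lemma exists_sqrt_cover (d : ℕ) (hd : 0 < d) :
    ∃ e : ℕ, 0 < e ∧ d ∣ e ^ 2 ∧ ∀ x : ℤ, (d : ℤ) ∣ x ^ 2 → (e : ℤ) ∣ x := by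
  obtain ⟨a, s, hprod, hsq⟩ := Nat.sq_mul_squarefree d
  have ha : 0 < a := by
    rcases Nat.eq_zero_or_pos a with h | h
    · subst h; simp at hprod; omega
    · exact h
  have hs : 0 < s := by
    rcases Nat.eq_zero_or_pos s with h | h
    · subst h; simp at hprod; omega
    · exact h
  refine ⟨s * a, by positivity, ?_, ?_⟩
  · rw [← hprod, mul_pow]
    exact mul_dvd_mul_left _ (dvd_pow_self a two_ne_zero)
  · intro x hx
    have hn : d ∣ x.natAbs ^ 2 := by
      rw [← Int.natAbs_pow]
      exact Int.natCast_dvd.mp hx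
    set n := x.natAbs with hndef
    have hsn : s ∣ n := by
      rw [← Nat.pow_dvd_pow_iff (two_ne_zero)]
      calc s ^ 2 ∣ d := ⟨a, hprod.symm⟩
        _ ∣ n ^ 2 := hn
    obtain ⟨c, hc⟩ := hsn
    have hac : a ∣ c := by
      have h2 : s ^ 2 * a ∣ s ^ 2 * c ^ 2 := by
        rw [hprod]
        calc d ∣ n ^ 2 := hn
          _ = s ^ 2 * c ^ 2 := by rw [hc]; ring
      have := (mul_dvd_mul_iff_left (a := s ^ 2) (by positivity)).mp h2
      exact (hsq.dvd_pow_iff_dvd two_ne_zero).mp this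
    have : s * a ∣ n := by
      obtain ⟨u, hu⟩ := hac
      exact ⟨u, by rw [hc, hu]; ring⟩
    exact Int.natCast_dvd.mpr this

lemma div_gcd_dvd_step {e n u : ℕ} (he : 0 < e) (hn : 0 < n) {p : ℕ} (hp : p.Prime)
    (hpu : ¬ p ∣ u) (h : e / e.gcd u ∣ n) : e.factorization p ≤ n.factorization p := by
  have hg : e.gcd u ∣ e := Nat.gcd_dvd_left e u
  have hgp : ¬ p ∣ e.gcd u := fun hd => hpu (hd.trans (Nat.gcd_dvd_right e u))
  have hge : 0 < e.gcd u := Nat.pos_of_dvd_of_pos hg he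
  have hfac : (e / e.gcd u).factorization p = e.factorization p := by
    rw [Nat.factorization_div hg]
    simp [Nat.factorization_eq_zero_of_not_dvd hgp]
  calc e.factorization p = (e / e.gcd u).factorization p := hfac.symm
    _ ≤ n.factorization p :=
      (Nat.factorization_le_iff_dvd (Nat.div_pos (Nat.le_of_dvd he hg) hge).ne' hn.ne').mpr h p

lemma dvd_of_div_gcd_dvd {e n a b c : ℕ} (he : 0 < e) (hn : 0 < n)
    (h1 : e / e.gcd a ∣ n) (h2 : e / e.gcd b ∣ n) (h3 : e / e.gcd c ∣ n)
    (hco : Nat.gcd a (Nat.gcd b c) = 1) : e ∣ n := by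
  rw [← Nat.factorization_le_iff_dvd he.ne' hn.ne']
  intro p
  by_cases hp : p.Prime
  · by_cases hpa : p ∣ a
    · by_cases hpb : p ∣ b
      · have hpc : ¬ p ∣ c := by
          intro hpc
          have : p ∣ 1 := hco ▸ Nat.dvd_gcd hpa (Nat.dvd_gcd hpb hpc)
          exact hp.one_lt.ne' (Nat.dvd_one.mp this)
        exact div_gcd_dvd_step he hn hp hpc h3
      · exact div_gcd_dvd_step he hn hp hpb h2
    · exact div_gcd_dvd_step he hn hp hpa h1
  · simp [Nat.factorization_eq_zero_of_not_prime _ hp]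

lemma addOrderOf_intCast (e : ℕ) (he : 0 < e) (A : ℤ) :
    addOrderOf ((A : ZMod e)) = e / e.gcd A.natAbs := by
  obtain ⟨n, h | h⟩ : ∃ n : ℕ, A = n ∨ A = -n := ⟨A.natAbs, Int.natAbs_eq A⟩
  · subst h
    rw [Int.cast_natCast, ZMod.addOrderOf_coe _ he.ne', Int.natAbs_natCast]
  · subst h
    rw [Int.cast_neg, Int.cast_natCast, addOrderOf_neg, ZMod.addOrderOf_coe _ he.ne',
      Int.natAbs_neg, Int.natAbs_natCast]

lemma poly_bound (W lam I : ℕ) (hW : 1 ≤ W) (hlam : 1 ≤ lam) (hI : 1 ≤ I)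
    (hsq : lam * lam ≤ I) :
    ((W-1)+lam)*(4*W*lam+I) ≤ 4*W^2*lam + 6*W*(lam*I) := by
  obtain ⟨W', rfl⟩ : ∃ W', W = W' + 1 := ⟨W - 1, by omega⟩
  simp only [Nat.add_sub_cancel]
  have h1 : W' * I ≤ W' * (lam * I) :=
    Nat.mul_le_mul_left _ (Nat.le_mul_of_pos_left _ hlam)
  have h2 : 4*(W'+1)*(lam*lam) ≤ 4*(W'+1)*I := Nat.mul_le_mul_left _ hsq
  have h3 : 4*(W'+1)*I ≤ 4*(W'+1)*(lam*I) :=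
    Nat.mul_le_mul_left _ (Nat.le_mul_of_pos_left _ hlam)
  have h4 : lam*I ≤ (W'+1)*(lam*I) := Nat.le_mul_of_pos_left _ (by omega)
  nlinarith [h1, h2, h3, h4]

lemma ker_psi_eq (u : ℤ × ℤ) (α β : ℤ) (hbez : α * u.1 + β * u.2 = 1) (x : ℤ × ℤ)
    (hx : u.2 * x.1 - u.1 * x.2 = 0) : x = (α * x.1 + β * x.2) • u := by
  have h1 : x.1 = (α * x.1 + β * x.2) * u.1 := by linear_combination x.1 * hbez.symm + β * hx
  have h2 : x.2 = (α * x.1 + β * x.2) * u.2 := by linear_combination x.2 * hbez.symm - α * hx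
  exact Prod.ext (by simpa using h1) (by simpa using h2)

lemma index_le_psi (G : AddSubgroup (ℤ × ℤ)) (v : ℤ × ℤ) (hv : v ∈ G) (hv0 : v ≠ 0)
    (w : ℤ × ℤ) (hw : w ∈ G) (hps : v.2 * w.1 - v.1 * w.2 ≠ 0) :
    Nat.card ((ℤ × ℤ) ⧸ G) ≤ (v.2 * w.1 - v.1 * w.2).natAbs := by
  set γ : ℕ := Int.gcd v.1 v.2 with hγdef
  have hγ0 : 0 < γ := by
    rw [hγdef, Int.gcd_pos_iff]
    by_contra h
    push_neg at h
    exact hv0 (Prod.ext h.1 h.2)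
  set u : ℤ × ℤ := (v.1 / γ, v.2 / γ) with hudef
  have hu1 : (γ : ℤ) * u.1 = v.1 := Int.mul_ediv_cancel' (Int.gcd_dvd_left _ _)
  have hu2 : (γ : ℤ) * u.2 = v.2 := Int.mul_ediv_cancel' (Int.gcd_dvd_right _ _)
  have hgcdu : Int.gcd u.1 u.2 = 1 := Int.gcd_div_gcd_div_gcd (by exact_mod_cast hγ0)
  obtain ⟨α, β, hbez⟩ : ∃ α β : ℤ, α * u.1 + β * u.2 = 1 := by
    refine ⟨Int.gcdA u.1 u.2, Int.gcdB u.1 u.2, ?_⟩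
    have := Int.gcd_eq_gcd_ab u.1 u.2
    rw [hgcdu] at this
    push_cast at this
    linarith [this]
  set δ : ℤ := u.2 * w.1 - u.1 * w.2 with hδdef
  have hδγ : v.2 * w.1 - v.1 * w.2 = γ * δ := by rw [← hu1, ← hu2]; ring
  have hδ0 : δ ≠ 0 := by
    intro h
    exact hps (by rw [hδγ, h, mul_zero])
  set ψ : ℤ × ℤ → ℤ := fun x => u.2 * x.1 - u.1 * x.2 with hψdef
  set τ : ℤ × ℤ → ℤ := fun x => α * x.1 + β * x.2 with hτdef
  set q : ℤ × ℤ → ℤ := fun x => ψ x / δ with hqdef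
  haveI : NeZero δ.natAbs := ⟨Int.natAbs_ne_zero.mpr hδ0⟩
  haveI : NeZero γ := ⟨hγ0.ne'⟩
  set μ : ℤ × ℤ → ZMod δ.natAbs × ZMod γ :=
    fun x => ((ψ x : ZMod δ.natAbs), ((τ x - q x * τ w : ℤ) : ZMod γ)) with hμdef
  have key : ∀ x y : ℤ × ℤ, μ x = μ y → x - y ∈ G := by
    intro x y hxy
    rw [hμdef, Prod.mk.injEq] at hxy
    obtain ⟨h1, h2⟩ := hxy
    have hd1 : δ ∣ ψ x - ψ y := by
      rw [← Int.natAbs_dvd]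
      exact Int.ModEq.dvd ((ZMod.intCast_eq_intCast_iff _ _ _).mp h1.symm)
    have hd2 : (γ : ℤ) ∣ (τ x - q x * τ w) - (τ y - q y * τ w) := by
      exact Int.ModEq.dvd ((ZMod.intCast_eq_intCast_iff _ _ _).mp h2.symm)
    have hr : ψ x - q x * δ = ψ y - q y * δ := by
      have e1 : ψ x - q x * δ = ψ x % δ := by
        rw [hqdef, Int.emod_def]; ring
      have e2 : ψ y - q y * δ = ψ y % δ := by
        rw [hqdef, Int.emod_def]; ring
      rw [e1, e2]
      exact Int.emod_eq_emod_iff_emod_sub_eq_zero.mpr (Int.emod_eq_zero_of_dvd hd1)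
    set z : ℤ × ℤ := (x - q x • w) - (y - q y • w) with hzdef
    have hz1 : ψ z = 0 := by
      simp only [hzdef, hψdef, Prod.fst_sub, Prod.snd_sub, Prod.smul_fst, Prod.smul_snd,
        smul_eq_mul]
      have : ψ w = δ := by rw [hψdef]
      linear_combination hr - (q x - q y) * (rfl : (u.2 * w.1 - u.1 * w.2) = δ)
    have hz2 : z = (τ z) • u := ker_psi_eq u α β hbez z (by
      rw [hψdef] at hz1; exact hz1)
    have hz3 : (γ : ℤ) ∣ τ z := by
      have : τ z = (τ x - q x * τ w) - (τ y - q y * τ w) := by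
        simp only [hzdef, hτdef, Prod.fst_sub, Prod.snd_sub, Prod.smul_fst, Prod.smul_snd,
          smul_eq_mul]
        ring
      rw [this]
      exact hd2
    obtain ⟨t, ht⟩ := hz3
    have hzG : z ∈ G := by
      have : z = t • v := by
        rw [hz2, ht]
        apply Prod.ext
        · have hu1' : (γ : ℤ) * (v.1 / (γ:ℤ)) = v.1 := hu1
          simp only [Prod.smul_fst, smul_eq_mul]
          linear_combination t * hu1'
        · have hu2' : (γ : ℤ) * (v.2 / (γ:ℤ)) = v.2 := hu2
          simp only [Prod.smul_snd, smul_eq_mul]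
          linear_combination t * hu2'
      rw [this]
      exact G.zsmul_mem hv t
    have hxy' : x - y = z + (q x • w - q y • w) := by
      rw [hzdef]; abel
    rw [hxy']
    exact G.add_mem hzG (G.sub_mem (G.zsmul_mem hw _) (G.zsmul_mem hw _))
  have hinj : Function.Injective (fun (c : (ℤ × ℤ) ⧸ G) => μ (Quotient.out c)) := by
    intro c c' h
    have hG := key _ _ h
    have h1 : ((Quotient.out c : ℤ × ℤ) : (ℤ × ℤ) ⧸ G) = ((Quotient.out c' : ℤ × ℤ) : (ℤ × ℤ) ⧸ G) := by
      apply QuotientAddGroup.eq.mpr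
      have h2 := G.neg_mem hG
      have h3 : -(Quotient.out c - Quotient.out c') = -(Quotient.out c) + Quotient.out c' := by abel
      rwa [h3] at h2
    rwa [QuotientAddGroup.out_eq', QuotientAddGroup.out_eq'] at h1
  calc Nat.card ((ℤ × ℤ) ⧸ G) ≤ Nat.card (ZMod δ.natAbs × ZMod γ) :=
        Nat.card_le_card_of_injective _ hinj
    _ = δ.natAbs * γ := by rw [Nat.card_prod, Nat.card_zmod, Nat.card_zmod]
    _ = (v.2 * w.1 - v.1 * w.2).natAbs := by
        rw [hδγ, Int.natAbs_mul, Int.natAbs_natCast, mul_comm]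

lemma lattice_count (G : AddSubgroup (ℤ × ℤ)) [DecidablePred (· ∈ G)] (I : ℕ)
    (hI : Nat.card ((ℤ × ℤ) ⧸ G) = I) (hIpos : 0 < I) (W : ℕ) (hW : 1 ≤ W) :
    ((((Finset.Icc (1:ℤ) (W:ℤ)) ×ˢ (Finset.Icc (1:ℤ) (W:ℤ))).filter
        (fun p => p ∈ G)).card : ℝ) ≤ 4 * (W:ℝ)^2 / (I:ℝ) + 6 * (W:ℝ) := by
  haveI hfin : Finite ((ℤ × ℤ) ⧸ G) := Nat.finite_of_card_ne_zero (by omega)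
  haveI : Fintype ((ℤ × ℤ) ⧸ G) := Fintype.ofFinite _
  set r := Nat.sqrt I with hrdef
  -- pigeonhole: a short nonzero vector exists
  have hpigeon : ∃ p : ℤ × ℤ, p ∈ G ∧ p ≠ 0 ∧ max p.1.natAbs p.2.natAbs ≤ r := by
    have hcard : (Finset.univ : Finset ((ℤ × ℤ) ⧸ G)).card <
        ((Finset.Icc (0:ℤ) (r:ℤ)) ×ˢ (Finset.Icc (0:ℤ) (r:ℤ))).card := by
      rw [Finset.card_product, Int.card_Icc, Finset.card_univ, ← Nat.card_eq_fintype_card, hI]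
      have h1 : ((r:ℤ) + 1 - 0).toNat = r + 1 := by omega
      rw [h1]
      calc I < (r + 1) * (r + 1) := by
            have := Nat.lt_succ_sqrt I
            simpa [Nat.succ_eq_add_one, mul_comm] using this
        _ = _ := by ring
    obtain ⟨a, ha, b, hb, hab, heq⟩ :=
      Finset.exists_ne_map_eq_of_card_lt_of_maps_to hcard
        (f := fun p => (p : (ℤ × ℤ) ⧸ G)) (fun a _ => Finset.mem_univ _)
    refine ⟨a - b, ?_, sub_ne_zero.mpr hab, ?_⟩
    · have h2 := QuotientAddGroup.eq.mp heq
      have h3 : a - b = -(-a + b) := by abel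
      rw [h3]
      exact G.neg_mem h2
    · simp only [Finset.mem_product, Finset.mem_Icc] at ha hb
      simp only [Prod.fst_sub, Prod.snd_sub, max_le_iff]
      omega
  -- minimal nonzero vector
  set J : Set ℕ := {n | ∃ p : ℤ × ℤ, p ∈ G ∧ p ≠ 0 ∧ max p.1.natAbs p.2.natAbs = n} with hJdef
  have hJne : J.Nonempty := by
    obtain ⟨p, h1, h2, _⟩ := hpigeon
    exact ⟨_, p, h1, h2, rfl⟩
  set lam := sInf J with hlamdef
  obtain ⟨v, hvG, hv0, hvnorm⟩ : ∃ p : ℤ × ℤ, p ∈ G ∧ p ≠ 0 ∧ max p.1.natAbs p.2.natAbs = lam :=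
    Nat.sInf_mem hJne
  have hmin : ∀ w : ℤ × ℤ, w ∈ G → w ≠ 0 → lam ≤ max w.1.natAbs w.2.natAbs :=
    fun w h1 h2 => Nat.sInf_le ⟨w, h1, h2, rfl⟩
  have hlam_le_r : lam ≤ r := by
    obtain ⟨p, h1, h2, h3⟩ := hpigeon
    exact le_trans (hmin p h1 h2) h3
  have hlampos : 0 < lam := by
    rcases Nat.eq_zero_or_pos lam with h | h
    · exfalso
      apply hv0
      rw [h] at hvnorm
      have h1 : v.1.natAbs = 0 ∧ v.2.natAbs = 0 := by omega
      have h2 : v.1 = 0 := by have := h1.1; omega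
      have h3 : v.2 = 0 := by have := h1.2; omega
      exact Prod.ext h2 h3
    · exact h
  -- structure of the minimal vector
  set gam : ℕ := Int.gcd v.1 v.2 with hgamdef
  have hgam0 : 0 < gam := by
    rw [hgamdef, Int.gcd_pos_iff]
    by_contra h
    push_neg at h
    exact hv0 (Prod.ext h.1 h.2)
  set u : ℤ × ℤ := (v.1 / (gam:ℤ), v.2 / (gam:ℤ)) with hudef
  have hu1 : (gam : ℤ) * u.1 = v.1 := Int.mul_ediv_cancel' (Int.gcd_dvd_left _ _)
  have hu2 : (gam : ℤ) * u.2 = v.2 := Int.mul_ediv_cancel' (Int.gcd_dvd_right _ _)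
  have hgv : (gam : ℤ) • u = v := Prod.ext (by simpa using hu1) (by simpa using hu2)
  have hgcdu : Int.gcd u.1 u.2 = 1 := Int.gcd_div_gcd_div_gcd (by exact_mod_cast hgam0)
  obtain ⟨al, be, hbez⟩ : ∃ al be : ℤ, al * u.1 + be * u.2 = 1 := by
    refine ⟨Int.gcdA u.1 u.2, Int.gcdB u.1 u.2, ?_⟩
    have := Int.gcd_eq_gcd_ab u.1 u.2
    rw [hgcdu] at this
    push_cast at this
    linarith [this]
  have hnormu : gam * max u.1.natAbs u.2.natAbs = lam := by
    have e1 : v.1.natAbs = gam * u.1.natAbs := by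
      rw [← hu1, Int.natAbs_mul, Int.natAbs_natCast]
    have e2 : v.2.natAbs = gam * u.2.natAbs := by
      rw [← hu2, Int.natAbs_mul, Int.natAbs_natCast]
    rw [← hvnorm, e1, e2, max_mul_mul_left]
  
  have humax : 0 < max u.1.natAbs u.2.natAbs := by
    rcases Nat.eq_zero_or_pos (max u.1.natAbs u.2.natAbs) with h | h
    · rw [h, Nat.mul_zero] at hnormu
      omega
    · exact h
  have hker : ∀ p : ℤ × ℤ, p ∈ G → u.2 * p.1 - u.1 * p.2 = 0 → ∃ t : ℤ, p = t • v := by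
    intro p hpG hp0
    have hpu : p = (al * p.1 + be * p.2) • u := ker_psi_eq u al be hbez p hp0
    set tp := al * p.1 + be * p.2 with htpdef
    set c : ℕ := Int.gcd (gam : ℤ) tp with hcdef
    have hcgam : c ∣ gam := by
      have h := Int.gcd_dvd_left (a := (gam:ℤ)) (b := tp)
      exact_mod_cast h
    have hc0 : 0 < c := by
      rw [hcdef, Int.gcd_pos_iff]
      left
      exact_mod_cast hgam0.ne'
    obtain ⟨a', b', hbez2⟩ : ∃ a' b' : ℤ, (c:ℤ) = (gam:ℤ) * a' + tp * b' :=
      ⟨Int.gcdA (gam:ℤ) tp, Int.gcdB (gam:ℤ) tp, Int.gcd_eq_gcd_ab _ _⟩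
    have hcuG : ((c:ℤ)) • u ∈ G := by
      have heq : ((c:ℤ)) • u = a' • v + b' • p := by
        rw [hpu, ← hgv, smul_smul, smul_smul, ← add_smul]
        congr 1
        linarith [hbez2]
      rw [heq]
      exact G.add_mem (G.zsmul_mem hvG _) (G.zsmul_mem hpG _)
    have hu0 : u ≠ 0 := by
      intro h
      rw [h, smul_zero] at hgv
      exact hv0 hgv.symm
    have hcu0 : ((c:ℤ)) • u ≠ 0 := smul_ne_zero (by exact_mod_cast hc0.ne') hu0
    have hnormcu : max (((c:ℤ)) • u).1.natAbs (((c:ℤ)) • u).2.natAbs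
        = c * max u.1.natAbs u.2.natAbs := by
      simp only [Prod.smul_fst, Prod.smul_snd, smul_eq_mul, Int.natAbs_mul, Int.natAbs_natCast]
      rw [max_mul_mul_left]
    have hlow := hmin _ hcuG hcu0
    rw [hnormcu] at hlow
    have hcgam' : c = gam := by
      have h1 : gam * max u.1.natAbs u.2.natAbs ≤ c * max u.1.natAbs u.2.natAbs := by
        rw [hnormu]; exact hlow
      exact le_antisymm (Nat.le_of_dvd hgam0 hcgam) (Nat.le_of_mul_le_mul_right h1 humax)
    have hdvd : (gam : ℤ) ∣ tp := by
      have h := Int.gcd_dvd_right (a := (gam:ℤ)) (b := tp)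
      rw [← hcdef, hcgam'] at h
      exact h
    obtain ⟨t, ht⟩ := hdvd
    refine ⟨t, ?_⟩
    rw [hpu, ht, ← hgv, smul_smul]
    congr 1
    ring
  
  have hlamsq : lam * lam ≤ I := by
    calc lam * lam ≤ r * r := Nat.mul_le_mul hlam_le_r hlam_le_r
      _ = r ^ 2 := (sq r).symm
      _ ≤ I := Nat.sqrt_le' I
  -- the box and the solution set
  set box : Finset (ℤ × ℤ) := (Finset.Icc (1:ℤ) (W:ℤ)) ×ˢ (Finset.Icc (1:ℤ) (W:ℤ)) with hboxdef
  set T : Finset (ℤ × ℤ) := box.filter (fun p => p ∈ G) with hTdef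
  set psi' : ℤ × ℤ → ℤ := fun x => u.2 * x.1 - u.1 * x.2 with hpsidef
  -- a coordinate functional realizing the sup norm of v
  obtain ⟨cf, ⟨hcfv, hcflin, hcfsmul⟩, hcfbox⟩ :
      ∃ cf : ℤ × ℤ → ℤ, ((cf v).natAbs = lam ∧ (∀ p q : ℤ × ℤ, cf (p - q) = cf p - cf q) ∧
        (∀ t : ℤ, ∀ p : ℤ × ℤ, cf (t • p) = t * cf p)) ∧
        (∀ p ∈ box, 1 ≤ cf p ∧ cf p ≤ (W:ℤ)) := by
    rcases max_cases v.1.natAbs v.2.natAbs with ⟨h1, _⟩ | ⟨h1, _⟩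
    · refine ⟨fun p => p.1, ⟨by rw [← hvnorm, h1], fun p q => rfl,
        fun t p => by simp [Prod.smul_fst, smul_eq_mul]⟩, fun p hp => ?_⟩
      rw [hboxdef, Finset.mem_product, Finset.mem_Icc, Finset.mem_Icc] at hp
      exact ⟨hp.1.1, hp.1.2⟩
    · refine ⟨fun p => p.2, ⟨by rw [← hvnorm, h1], fun p q => rfl,
        fun t p => by simp [Prod.smul_snd, smul_eq_mul]⟩, fun p hp => ?_⟩
      rw [hboxdef, Finset.mem_product, Finset.mem_Icc, Finset.mem_Icc] at hp
      exact ⟨hp.2.1, hp.2.2⟩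
  have hcfv0 : cf v ≠ 0 := by
    intro h
    rw [h] at hcfv
    simp at hcfv
    omega
  -- each fiber of psi' on T has at most (W-1)/lam + 1 elements
  have hfiber : ∀ σ ∈ T.image psi',
      (T.filter (fun p => psi' p = σ)).card ≤ (W - 1) / lam + 1 := by
    intro σ hσ
    set S := T.filter (fun p => psi' p = σ) with hSdef
    have hSne : S.Nonempty := by
      obtain ⟨p, hpT, hpσ⟩ := Finset.mem_image.mp hσ
      exact ⟨p, Finset.mem_filter.mpr ⟨hpT, hpσ⟩⟩
    obtain ⟨p₀, hp₀S, hp₀min⟩ := S.exists_min_image cf hSne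
    have hfacts : ∀ p ∈ S, ∃ t : ℤ, p - p₀ = t • v := by
      intro p hpS
      have hpT := (Finset.mem_filter.mp hpS).1
      have hpσ := (Finset.mem_filter.mp hpS).2
      have hp₀T := (Finset.mem_filter.mp hp₀S).1
      have hp₀σ := (Finset.mem_filter.mp hp₀S).2
      have hmem : p - p₀ ∈ G :=
        G.sub_mem (Finset.mem_filter.mp hpT).2 (Finset.mem_filter.mp hp₀T).2
      have hker0 : psi' (p - p₀) = 0 := by
        have : psi' (p - p₀) = psi' p - psi' p₀ := by
          simp only [hpsidef, Prod.fst_sub, Prod.snd_sub]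
          ring
        rw [this, hpσ, hp₀σ, sub_self]
      exact hker (p - p₀) hmem (by rw [hpsidef] at hker0; exact hker0)
    have hrange : ∀ p ∈ S, 0 ≤ cf p - cf p₀ ∧ cf p - cf p₀ ≤ (W:ℤ) - 1 ∧
        lam ∣ (cf p - cf p₀).natAbs := by
      intro p hpS
      have hpbox := (Finset.mem_filter.mp (Finset.mem_filter.mp hpS).1).1
      have hp₀box := (Finset.mem_filter.mp (Finset.mem_filter.mp hp₀S).1).1
      have h1 := hcfbox p hpbox
      have h2 := hcfbox p₀ hp₀box
      obtain ⟨t, ht⟩ := hfacts p hpS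
      have hcfs : cf p - cf p₀ = t * cf v := by
        rw [← hcflin, ht, hcfsmul]
      refine ⟨sub_nonneg.mpr (hp₀min p hpS), by omega, ?_⟩
      rw [hcfs, Int.natAbs_mul, hcfv]
      exact dvd_mul_left _ _
    have hcard := Finset.card_le_card_of_injOn
      (s := S) (t := Finset.range ((W - 1) / lam + 1)) (fun p => (cf p - cf p₀).toNat / lam) ?_ ?_
    · simpa using hcard
    · intro p hpS
      obtain ⟨h0, h1, hdvd⟩ := hrange p hpS
      rw [Finset.mem_coe, Finset.mem_range]
      have h2 : (cf p - cf p₀).toNat ≤ W - 1 := by omega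
      exact Nat.lt_succ_of_le (Nat.div_le_div_right h2)
    · intro p hpS p' hp'S heq
      obtain ⟨h0, h1, hdvd⟩ := hrange p hpS
      obtain ⟨h0', h1', hdvd'⟩ := hrange p' hp'S
      have htn : (cf p - cf p₀).natAbs = (cf p - cf p₀).toNat := by omega
      have htn' : (cf p' - cf p₀).natAbs = (cf p' - cf p₀).toNat := by omega
      have heqv : cf p = cf p' := by
        rw [htn] at hdvd
        rw [htn'] at hdvd'
        obtain ⟨k, hk⟩ := hdvd
        obtain ⟨k', hk'⟩ := hdvd'
        simp only at heq
        rw [hk, hk'] at heq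
        rw [Nat.mul_div_cancel_left _ hlampos, Nat.mul_div_cancel_left _ hlampos] at heq
        subst heq
        omega
      -- conclude p = p'
      obtain ⟨t, ht⟩ := hfacts p hpS
      obtain ⟨t', ht'⟩ := hfacts p' hp'S
      have hsub : p - p' = (t - t') • v := by
        have : p - p' = (p - p₀) - (p' - p₀) := by abel
        rw [this, ht, ht', sub_smul]
      have hcf0 : cf (p - p') = 0 := by rw [hcflin, heqv, sub_self]
      have hmul : (t - t') * cf v = 0 := by
        rw [← hcfsmul, ← hsub]
        exact hcf0
      have htt : t - t' = 0 := by
        rcases mul_eq_zero.mp hmul with h | h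
        · exact h
        · exact absurd h hcfv0
      have hzero : p - p' = 0 := by rw [hsub, htt, zero_smul]
      exact sub_eq_zero.mp hzero
  
  -- bound on the number of psi'-values
  set psig : ℤ × ℤ → ℤ := fun x => v.2 * x.1 - v.1 * x.2 with hpsigdef
  have hgampsi : ∀ x : ℤ × ℤ, (gam:ℤ) * psi' x = psig x := by
    intro x
    simp only [hpsidef, hpsigdef]
    linear_combination x.1 * hu2 + (- x.2) * hu1
  have hb1 : |v.1| ≤ (lam:ℤ) := by
    rw [Int.abs_eq_natAbs]
    exact_mod_cast le_trans (le_max_left _ _) hvnorm.le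
  have hb2 : |v.2| ≤ (lam:ℤ) := by
    rw [Int.abs_eq_natAbs]
    exact_mod_cast le_trans (le_max_right _ _) hvnorm.le
  have hbound : ∀ p ∈ box, |(gam:ℤ) * psi' p| ≤ 2*(W:ℤ)*lam := by
    intro p hp
    rw [hboxdef, Finset.mem_product, Finset.mem_Icc, Finset.mem_Icc] at hp
    rw [hgampsi, hpsigdef]
    have hp1 : |p.1| ≤ (W:ℤ) := by rw [abs_le]; omega
    have hp2 : |p.2| ≤ (W:ℤ) := by rw [abs_le]; omega
    calc |v.2 * p.1 - v.1 * p.2| ≤ |v.2 * p.1| + |v.1 * p.2| := abs_sub _ _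
      _ = |v.2| * |p.1| + |v.1| * |p.2| := by rw [abs_mul, abs_mul]
      _ ≤ (lam:ℤ) * W + (lam:ℤ) * W := add_le_add
          (mul_le_mul hb2 hp1 (abs_nonneg _) (by positivity))
          (mul_le_mul hb1 hp2 (abs_nonneg _) (by positivity))
      _ = 2*(W:ℤ)*lam := by ring
  set a : ℕ := 4 * W * lam / I with hadef
  have himg : (T.image psi').card ≤ a + 1 := by
    have hcard := Finset.card_le_card_of_injOn (s := T.image psi') (t := Finset.range (a+1))
      (fun σ => ((gam:ℤ) * σ + 2*(W:ℤ)*lam).toNat / I) ?_ ?_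
    · simpa using hcard
    · intro σ hσ
      obtain ⟨p, hpT, hpσ⟩ := Finset.mem_image.mp hσ
      have hb := hbound p (Finset.mem_filter.mp hpT).1
      rw [hpσ, abs_le] at hb
      rw [Finset.mem_coe, Finset.mem_range]
      have h2 : ((gam:ℤ)*σ + 2*(W:ℤ)*lam).toNat ≤ 4*W*lam := by
        have hcast : ((4*W*lam : ℕ) : ℤ) = 2*(2*(W:ℤ)*lam) := by push_cast; ring
        omega
      exact Nat.lt_succ_of_le (Nat.div_le_div_right h2)
    · intro σ hσ σ' hσ' heq
      by_contra hne
      obtain ⟨p, hpT, hpσ⟩ := Finset.mem_image.mp hσ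
      obtain ⟨p', hp'T, hp'σ⟩ := Finset.mem_image.mp hσ'
      have hb := hbound p (Finset.mem_filter.mp hpT).1
      rw [hpσ, abs_le] at hb
      have hb' := hbound p' (Finset.mem_filter.mp hp'T).1
      rw [hp'σ, abs_le] at hb'
      have hwG : p - p' ∈ G :=
        G.sub_mem (Finset.mem_filter.mp hpT).2 (Finset.mem_filter.mp hp'T).2
      have hψw : psi' (p - p') = σ - σ' := by
        rw [← hpσ, ← hp'σ]
        simp only [hpsidef, Prod.fst_sub, Prod.snd_sub]
        ring
      have hψgw : psig (p - p') = (gam:ℤ)*(σ - σ') := by rw [← hgampsi, hψw]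
      have hne0 : v.2 * (p - p').1 - v.1 * (p - p').2 ≠ 0 := by
        have hq : v.2 * (p - p').1 - v.1 * (p - p').2 = psig (p - p') := by
          rw [hpsigdef]
        rw [hq, hψgw]
        intro h
        rcases mul_eq_zero.mp h with h | h
        · exact absurd h (by exact_mod_cast hgam0.ne')
        · apply hne
          omega
      have hidx := index_le_psi G v hvG hv0 (p - p') hwG hne0
      rw [hI] at hidx
      have hidx2 : I ≤ ((gam:ℤ)*σ - (gam:ℤ)*σ').natAbs := by
        have hq : v.2 * (p - p').1 - v.1 * (p - p').2 = (gam:ℤ)*σ - (gam:ℤ)*σ' := by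
          rw [← sub_eq_zero]
          rw [show v.2 * (p - p').1 - v.1 * (p - p').2 = psig (p - p') from by rw [hpsigdef]]
          rw [hψgw]
          ring
        rwa [hq] at hidx
      simp only at heq
      have e1 := Nat.div_add_mod (((gam:ℤ) * σ + 2*(W:ℤ)*lam).toNat) I
      have e2 := Nat.div_add_mod (((gam:ℤ) * σ' + 2*(W:ℤ)*lam).toNat) I
      have m1 : ((gam:ℤ) * σ + 2*(W:ℤ)*lam).toNat % I < I := Nat.mod_lt _ hIpos
      have m2 : ((gam:ℤ) * σ' + 2*(W:ℤ)*lam).toNat % I < I := Nat.mod_lt _ hIpos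
      rw [heq] at e1
      omega
  -- put the two bounds together
  have hcount := Finset.card_le_mul_card_image (f := psi') T ((W-1)/lam + 1) hfiber
  have hTcard : T.card ≤ ((W-1)/lam + 1) * (a + 1) :=
    le_trans hcount (Nat.mul_le_mul_left _ himg)
  have hA : ((W-1)/lam + 1) * lam ≤ (W - 1) + lam := by
    have h := Nat.div_mul_le_self (W-1) lam
    calc ((W-1)/lam + 1) * lam = (W-1)/lam * lam + lam := by ring
      _ ≤ (W-1) + lam := by omega
  have hB : (a + 1) * I ≤ 4*W*lam + I := by
    have h := Nat.div_mul_le_self (4*W*lam) I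
    calc (a + 1) * I = (4*W*lam)/I * I + I := by rw [hadef]; ring
      _ ≤ 4*W*lam + I := by omega
  have hkey : T.card * (lam * I) ≤ 4*W^2*lam + 6*W*(lam*I) := by
    calc T.card * (lam*I) ≤ (((W-1)/lam + 1) * (a + 1))*(lam*I) :=
          Nat.mul_le_mul_right _ hTcard
      _ = (((W-1)/lam + 1)*lam)*((a + 1)*I) := by ring
      _ ≤ ((W-1)+lam)*(4*W*lam+I) := Nat.mul_le_mul hA hB
      _ ≤ 4*W^2*lam + 6*W*(lam*I) := poly_bound W lam I hW hlampos hIpos hlamsq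
  -- conversion to the real statement
  have hpos : (0:ℝ) < ((lam * I : ℕ):ℝ) := by
    have : 0 < lam * I := Nat.mul_pos hlampos hIpos
    exact_mod_cast this
  have hfinal : (T.card : ℝ) ≤ ((4*W^2*lam + 6*W*(lam*I) : ℕ):ℝ) / ((lam*I : ℕ):ℝ) := by
    rw [le_div_iff₀ hpos]
    exact_mod_cast hkey
  refine le_trans hfinal (le_of_eq ?_)
  have hlamR : (0:ℝ) < (lam:ℝ) := by exact_mod_cast hlampos
  have hIR : (0:ℝ) < (I:ℝ) := by exact_mod_cast hIpos
  push_cast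
  field_simp

lemma card_range_ge (e : ℕ) (he : 0 < e) (A B C : ℤ)
    (hgcd : Nat.gcd A.natAbs (Nat.gcd B.natAbs C.natAbs) = 1)
    (φ : (ℤ × ℤ) →+ (ZMod e × ZMod e))
    (h1 : φ (1, 0) = (((A : ℤ) : ZMod e), ((B : ℤ) : ZMod e)))
    (h2 : φ (0, -1) = (((B : ℤ) : ZMod e), ((C : ℤ) : ZMod e))) :
    e ≤ Nat.card φ.range := by
  haveI : NeZero e := ⟨he.ne'⟩
  have hpos : 0 < Nat.card φ.range := Nat.card_pos
  have o1 : addOrderOf ((((A : ℤ) : ZMod e), ((B : ℤ) : ZMod e)) : ZMod e × ZMod e)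
      ∣ Nat.card φ.range :=
    AddSubgroup.addOrderOf_dvd_natCard _ (h1 ▸ ⟨(1, 0), rfl⟩)
  have o2 : addOrderOf ((((B : ℤ) : ZMod e), ((C : ℤ) : ZMod e)) : ZMod e × ZMod e)
      ∣ Nat.card φ.range :=
    AddSubgroup.addOrderOf_dvd_natCard _ (h2 ▸ ⟨(0, -1), rfl⟩)
  rw [Prod.addOrderOf, addOrderOf_intCast e he, addOrderOf_intCast e he] at o1 o2
  have dA : e / e.gcd A.natAbs ∣ Nat.card φ.range :=
    dvd_trans (Nat.dvd_lcm_left _ _) o1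
  have dB : e / e.gcd B.natAbs ∣ Nat.card φ.range :=
    dvd_trans (Nat.dvd_lcm_right _ _) o1
  have dC : e / e.gcd C.natAbs ∣ Nat.card φ.range :=
    dvd_trans (Nat.dvd_lcm_right _ _) o2
  exact Nat.le_of_dvd hpos (dvd_of_div_gcd_dvd he hpos dA dB dC hgcd)

/-- There is an absolute constant `C₀ > 0` such that for every primitive binary
quadratic form `f(x,y) = Ax² + 2Bxy + Cy²` of discriminant `-8b²` (`b ≠ 0`), every
`d ∣ 2b²` with `d > 0`, and every `W ≥ 1`, the number of pairs `1 ≤ m, n ≤ W` with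
`Am² - 2Bmn + Cn² ≡ 0 (mod d)` is at most `C₀ (W² d^{-1/2} + W)`. -/
theorem count_pairs_quadratic_form_divisible :
    ∃ C₀ : ℝ, 0 < C₀ ∧
      ∀ A B C b : ℤ, b ≠ 0 → Int.gcd A (Int.gcd (2 * B) C) = 1 →
        B ^ 2 - A * C = -2 * b ^ 2 →
        ∀ d : ℤ, 0 < d → d ∣ 2 * b ^ 2 → ∀ W : ℕ, 1 ≤ W →
          ({p : ℤ × ℤ | 1 ≤ p.1 ∧ p.1 ≤ W ∧ 1 ≤ p.2 ∧ p.2 ≤ W ∧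
              d ∣ (A * p.1 ^ 2 - 2 * B * p.1 * p.2 + C * p.2 ^ 2)}.ncard : ℝ) ≤
            C₀ * ((W : ℝ) ^ 2 * (d : ℝ) ^ (-(1 : ℝ) / 2) + (W : ℝ)) := by
  refine ⟨6, by norm_num, ?_⟩
  intro A B C b hb hgcd hdisc d hd hdvd W hW
  set dn : ℕ := d.toNat with hdndef
  have hdn0 : 0 < dn := by omega
  have hdcast : (dn : ℤ) = d := by omega
  obtain ⟨e, he0, hesq, hecov⟩ := exists_sqrt_cover dn hdn0
  haveI : NeZero e := ⟨he0.ne'⟩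
  set φ : (ℤ × ℤ) →+ (ZMod e × ZMod e) :=
    { toFun := fun p => (((A * p.1 - B * p.2 : ℤ) : ZMod e), ((B * p.1 - C * p.2 : ℤ) : ZMod e)),
      map_zero' := by simp
      map_add' := by
        intro x y
        simp only [Prod.fst_add, Prod.snd_add, Prod.mk_add_mk, Prod.mk.injEq]
        constructor <;> · push_cast; ring } with hφdef
  set G := φ.ker with hGdef
  haveI : DecidablePred (fun p : ℤ × ℤ => p ∈ G) := Classical.decPred _
  -- gcd in ℕ
  have hgcdnat : Nat.gcd A.natAbs (Nat.gcd B.natAbs C.natAbs) = 1 := by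
    have hkey : Int.gcd A ((Int.gcd (2*B) C : ℕ) : ℤ)
        = Nat.gcd A.natAbs (Nat.gcd (2*B).natAbs C.natAbs) := by
      simp [Int.gcd, Int.natAbs_natCast]
    have h1 : Nat.gcd A.natAbs (Nat.gcd B.natAbs C.natAbs)
        ∣ Nat.gcd A.natAbs (Nat.gcd (2*B).natAbs C.natAbs) := by
      apply Nat.dvd_gcd (Nat.gcd_dvd_left _ _)
      apply Nat.dvd_gcd
      · have h2 : (2*B).natAbs = 2 * B.natAbs := by simp [Int.natAbs_mul]
        rw [h2]
        exact Dvd.dvd.mul_left ((Nat.gcd_dvd_right _ _).trans (Nat.gcd_dvd_left _ _)) 2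
      · exact (Nat.gcd_dvd_right _ _).trans (Nat.gcd_dvd_right _ _)
    rw [← hkey, hgcd] at h1
    exact Nat.dvd_one.mp h1
  
  have hφ1 : φ (1, 0) = (((A : ℤ) : ZMod e), ((B : ℤ) : ZMod e)) := by
    simp only [hφdef, AddMonoidHom.coe_mk, ZeroHom.coe_mk]
    norm_num
  have hφ2 : φ (0, -1) = (((B : ℤ) : ZMod e), ((C : ℤ) : ZMod e)) := by
    simp only [hφdef, AddMonoidHom.coe_mk, ZeroHom.coe_mk]
    norm_num
  set I : ℕ := Nat.card ((ℤ × ℤ) ⧸ G) with hIdef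
  have hIeq : I = Nat.card φ.range :=
    Nat.card_congr (QuotientAddGroup.quotientKerEquivRange φ).toEquiv
  have hIge : e ≤ I := by
    rw [hIeq]
    exact card_range_ge e he0 A B C hgcdnat φ hφ1 hφ2
  have hIpos : 0 < I := lt_of_lt_of_le he0 hIge
  set box : Finset (ℤ × ℤ) := (Finset.Icc (1:ℤ) (W:ℤ)) ×ˢ (Finset.Icc (1:ℤ) (W:ℤ)) with hboxdef
  set T : Finset (ℤ × ℤ) := box.filter (fun p => p ∈ G) with hTdef
  have hsub : {p : ℤ × ℤ | 1 ≤ p.1 ∧ p.1 ≤ W ∧ 1 ≤ p.2 ∧ p.2 ≤ W ∧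
      d ∣ (A * p.1 ^ 2 - 2 * B * p.1 * p.2 + C * p.2 ^ 2)} ⊆ (T : Set (ℤ × ℤ)) := by
    intro p hp
    obtain ⟨hp1, hp2, hp3, hp4, hp5⟩ := hp
    have hbox : p ∈ box := by
      rw [hboxdef, Finset.mem_product, Finset.mem_Icc, Finset.mem_Icc]
      exact ⟨⟨hp1, hp2⟩, ⟨hp3, hp4⟩⟩
    have hG : p ∈ G := by
      have hsq1 : d ∣ (A * p.1 - B * p.2)^2 := by
        have hid : (A * p.1 - B * p.2)^2
            = A * (A * p.1 ^ 2 - 2*B*p.1*p.2 + C*p.2^2) - (2*b^2) * p.2^2 := by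
          linear_combination (p.2^2) * hdisc
        rw [hid]
        exact dvd_sub (hp5.mul_left A) (hdvd.mul_right _)
      have hsq2 : d ∣ (B * p.1 - C * p.2)^2 := by
        have hid : (B * p.1 - C * p.2)^2
            = C * (A * p.1 ^ 2 - 2*B*p.1*p.2 + C*p.2^2) - (2*b^2) * p.1^2 := by
          linear_combination (p.1^2) * hdisc
        rw [hid]
        exact dvd_sub (hp5.mul_left C) (hdvd.mul_right _)
      have he1 : (e:ℤ) ∣ A * p.1 - B * p.2 := hecov _ (by rw [hdcast]; exact hsq1)
      have he2 : (e:ℤ) ∣ B * p.1 - C * p.2 := hecov _ (by rw [hdcast]; exact hsq2)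
      rw [hGdef, AddMonoidHom.mem_ker]
      have hz1 : ((A * p.1 - B * p.2 : ℤ) : ZMod e) = 0 :=
        (ZMod.intCast_zmod_eq_zero_iff_dvd _ _).mpr he1
      have hz2 : ((B * p.1 - C * p.2 : ℤ) : ZMod e) = 0 :=
        (ZMod.intCast_zmod_eq_zero_iff_dvd _ _).mpr he2
      simp only [hφdef, AddMonoidHom.coe_mk, ZeroHom.coe_mk]
      rw [hz1, hz2]
      rfl
    exact Finset.mem_coe.mpr (Finset.mem_filter.mpr ⟨hbox, hG⟩)
  have hncard : ({p : ℤ × ℤ | 1 ≤ p.1 ∧ p.1 ≤ W ∧ 1 ≤ p.2 ∧ p.2 ≤ W ∧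
      d ∣ (A * p.1 ^ 2 - 2 * B * p.1 * p.2 + C * p.2 ^ 2)}.ncard : ℝ) ≤ (T.card : ℝ) := by
    have h := Set.ncard_le_ncard hsub (T : Set (ℤ × ℤ)).toFinite
    rw [Set.ncard_coe_finset] at h
    exact_mod_cast h
  have hTb := lattice_count G I rfl hIpos W hW
  have hsqrt : Real.sqrt (d:ℝ) ≤ (I:ℝ) := by
    have h1 : Real.sqrt (d:ℝ) ≤ (e:ℝ) := by
      rw [show ((d:ℝ)) = ((dn:ℕ):ℝ) by exact_mod_cast hdcast.symm]
      rw [show ((e:ℝ)) = Real.sqrt ((e:ℝ)^2) from (Real.sqrt_sq (by positivity)).symm]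
      apply Real.sqrt_le_sqrt
      exact_mod_cast Nat.le_of_dvd (by positivity) hesq
    calc Real.sqrt (d:ℝ) ≤ (e:ℝ) := h1
      _ ≤ (I:ℝ) := by exact_mod_cast hIge
  have hdpos : (0:ℝ) < (d:ℝ) := by exact_mod_cast hd
  have hsd : 0 < Real.sqrt (d:ℝ) := Real.sqrt_pos.mpr hdpos
  have hrpow : ((d:ℝ)) ^ (-(1:ℝ)/2) = (Real.sqrt (d:ℝ))⁻¹ := by
    rw [show (-(1:ℝ)/2) = -(1/2 : ℝ) by norm_num, Real.rpow_neg hdpos.le,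
      ← Real.sqrt_eq_rpow]
  calc ({p : ℤ × ℤ | 1 ≤ p.1 ∧ p.1 ≤ W ∧ 1 ≤ p.2 ∧ p.2 ≤ W ∧
      d ∣ (A * p.1 ^ 2 - 2 * B * p.1 * p.2 + C * p.2 ^ 2)}.ncard : ℝ)
      ≤ (T.card : ℝ) := hncard
    _ ≤ 4 * (W:ℝ)^2 / (I:ℝ) + 6 * (W:ℝ) := hTb
    _ ≤ 4 * (W:ℝ)^2 / Real.sqrt (d:ℝ) + 6 * (W:ℝ) := by
        gcongr
    _ ≤ 6 * ((W : ℝ) ^ 2 * (d : ℝ) ^ (-(1 : ℝ) / 2) + (W : ℝ)) := by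
        rw [hrpow]
        have hterm : 0 ≤ (W:ℝ)^2 * (Real.sqrt (d:ℝ))⁻¹ := by positivity
        rw [div_eq_mul_inv]
        nlinarith [hterm]
end
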